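/- arXiv:2404.17863 — 4 statements merged into one kernel-verified Lean document; each statement's English description precedes it below -/
import Mathlib

section
/- Suppose θ = (1/π)·arg(q) is irrational (in particular q is not real). Then the center of 𝒜 is trivial: every element T ∈ 𝒜 that commutes with all elements of 𝒜 is a scalar multiple of the identity operator. -/
open scoped InnerProductSpace
noncomputable section

/-- The Hilbert space `H = ℓ²(ℕ × ℤ × ℤ)`. -/
abbrev UqH : Type := lp (fun _ : ℕ × ℤ × ℤ => ℂ) 2

/-- The standard orthonormal basis vectors `e_{i,j,k}` of `H`. -/
def e (i : ℕ) (j k : ℤ) : UqH := lp.single 2 (i, j, k) 1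

open ComplexConjugate

namespace UqAux

/-- matrix entry of an operator -/
def ent (S : UqH →L[ℂ] UqH) (p p' : ℕ × ℤ × ℤ) : ℂ :=
  (S (lp.single 2 p 1) : ∀ _ : ℕ × ℤ × ℤ, ℂ) p'

lemma single_inner (x : UqH) (p : ℕ × ℤ × ℤ) :
    ⟪(lp.single 2 p 1 : UqH), x⟫_ℂ = x p := by
  classical
  rw [lp.inner_single_left, RCLike.inner_apply]
  simp

lemma ent_eq_inner (S : UqH →L[ℂ] UqH) (p p' : ℕ × ℤ × ℤ) :
    ent S p p' = ⟪(lp.single 2 p' 1 : UqH), S (lp.single 2 p 1)⟫_ℂ := by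
  rw [single_inner]; rfl

lemma continuous_ent (p p' : ℕ × ℤ × ℤ) :
    Continuous fun S : UqH →L[ℂ] UqH => ent S p p' := by
  have h1 : Continuous fun S : UqH →L[ℂ] UqH => S (lp.single 2 p 1) :=
    (ContinuousLinearMap.apply ℂ UqH (lp.single 2 p 1)).continuous
  have h2 : Continuous fun y : UqH => ⟪(lp.single 2 p' 1 : UqH), y⟫_ℂ :=
    (innerSL ℂ (lp.single 2 p' 1 : UqH)).continuous
  have h3 := h2.comp h1
  convert h3 using 1
  funext S
  rw [ent_eq_inner]
  rfl

lemma ent_star (S : UqH →L[ℂ] UqH) (p p' : ℕ × ℤ × ℤ) :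
    ent (star S) p p' = conj (ent S p' p) := by
  rw [ent_eq_inner, ContinuousLinearMap.star_eq_adjoint, ← inner_conj_symm,
    ContinuousLinearMap.adjoint_inner_left]
  rw [single_inner]
  rfl

lemma ent_mul (S S' : UqH →L[ℂ] UqH) (p p' : ℕ × ℤ × ℤ) :
    ent (S * S') p p' = ∑' r : ℕ × ℤ × ℤ, ent S r p' * ent S' p r := by
  have h0 : ent (S * S') p p' = ⟪(lp.single 2 p' 1 : UqH), S (S' (lp.single 2 p 1))⟫_ℂ := by
    rw [ent_eq_inner]; rfl
  rw [h0, ← ContinuousLinearMap.adjoint_inner_left, ← ContinuousLinearMap.star_eq_adjoint,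
    lp.inner_eq_tsum]
  apply tsum_congr
  intro r
  rw [RCLike.inner_apply]
  have h1 : ((star S) (lp.single 2 p' 1) : ∀ _ : ℕ × ℤ × ℤ, ℂ) r = conj (ent S r p') := by
    have := ent_star S p' r
    rw [ent] at this
    rw [this]
  rw [h1, Complex.conj_conj]
  exact mul_comm _ _

lemma coord_formula (S : UqH →L[ℂ] UqH) (c : ℕ × ℤ × ℤ → ℂ) (σ : ℕ × ℤ × ℤ → ℕ × ℤ × ℤ)
    (hσ : Function.Injective σ)
    (hS : ∀ p, S (lp.single 2 p 1) = c p • lp.single 2 (σ p) 1)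
    (x : UqH) (p : ℕ × ℤ × ℤ) :
    (S x : ∀ _ : ℕ × ℤ × ℤ, ℂ) (σ p) = c p * x p := by
  classical
  have h1 : HasSum (fun r : ℕ × ℤ × ℤ => lp.single 2 r (x r)) x :=
    lp.hasSum_single (by norm_num) x
  have h2 : HasSum (fun r : ℕ × ℤ × ℤ => S (lp.single 2 r (x r))) (S x) := h1.mapL S
  have h3 : HasSum
      (fun r : ℕ × ℤ × ℤ => ⟪(lp.single 2 (σ p) 1 : UqH), S (lp.single 2 r (x r))⟫_ℂ)
      ⟪(lp.single 2 (σ p) 1 : UqH), S x⟫_ℂ :=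
    h2.mapL (innerSL ℂ (lp.single 2 (σ p) 1 : UqH))
  have h4 : (fun r : ℕ × ℤ × ℤ => ⟪(lp.single 2 (σ p) 1 : UqH), S (lp.single 2 r (x r))⟫_ℂ)
      = fun r => if r = p then c p * x p else 0 := by
    funext r
    have hsm : lp.single 2 r (x r) = x r • (lp.single 2 r 1 : UqH) := by
      rw [← lp.single_smul]
      norm_num
    rw [hsm, map_smul, hS r, single_inner]
    by_cases hr : r = p
    · subst hr
      simp only [if_pos rfl, lp.coeFn_smul, Pi.smul_apply, smul_eq_mul]
      rw [lp.single_apply_self]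
      simp [mul_comm]
    · have hne : σ r ≠ σ p := fun hh => hr (hσ hh)
      simp only [if_neg hr, lp.coeFn_smul, Pi.smul_apply, smul_eq_mul]
      rw [lp.single_apply_ne _ _ _ (Ne.symm hne)]
      ring
  rw [h4] at h3
  have h5 : HasSum (fun r : ℕ × ℤ × ℤ => if r = p then c p * x p else 0) (c p * x p) :=
    hasSum_ite_eq p _
  have h6 := h3.unique h5
  rw [single_inner] at h6
  exact h6

lemma ent_apply_single (S : UqH →L[ℂ] UqH) (p p'' : ℕ × ℤ × ℤ) (cc : ℂ)
    (h : S (lp.single 2 p 1) = cc • lp.single 2 p'' 1) (p' : ℕ × ℤ × ℤ) :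
    ent S p p' = if p' = p'' then cc else 0 := by
  classical
  rw [ent, h, lp.coeFn_smul, Pi.smul_apply, smul_eq_mul]
  by_cases hh : p' = p''
  · subst hh; rw [lp.single_apply_self]; simp
  · rw [lp.single_apply_ne _ _ _ hh]; simp [hh]

lemma ent_add (S S' : UqH →L[ℂ] UqH) (p p' : ℕ × ℤ × ℤ) :
    ent (S + S') p p' = ent S p p' + ent S' p p' := by
  rw [ent, ent, ent, ContinuousLinearMap.add_apply, lp.coeFn_add, Pi.add_apply]


lemma Qgen (lam : ℂ) (S : UqH →L[ℂ] UqH) (di : ℕ) (dj dk : ℤ) (f : ℕ → ℤ → ℂ)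
    (hf : ∀ (i : ℕ) (j : ℤ), f i (j+1) = lam ^ dk * f i j)
    (hS : ∀ (i : ℕ) (j k : ℤ),
      S (lp.single 2 (i,j,k) 1) = f i j • lp.single 2 (i+di, j+dj, k+dk) 1)
    (hlamne : lam ≠ 0) :
    (∀ (i : ℕ) (j k : ℤ) (i' : ℕ) (j' k' : ℤ),
      ent S (i,j+1,k) (i',j'+1,k') = lam ^ (k'-k) * ent S (i,j,k) (i',j',k'))
    ∧ (∀ (i : ℕ) (j k : ℤ) (i' : ℕ) (j' k' : ℤ),
      ent S (i,j,k+1) (i',j',k'+1) = ent S (i,j,k) (i',j',k')) := by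
  classical
  constructor
  · intro i j k i' j' k'
    rw [ent_apply_single S _ _ _ (hS i (j+1) k), ent_apply_single S _ _ _ (hS i j k)]
    by_cases h : (i', j', k') = ((i+di : ℕ), j+dj, k+dk)
    · simp only [Prod.mk.injEq] at h
      obtain ⟨h1, h2, h3⟩ := h
      subst h1; subst h2; subst h3
      have hc1 : ((i+di : ℕ), (j+dj)+1, k+dk) = ((i+di : ℕ), (j+1)+dj, k+dk) := by
        rw [show (j+dj)+1 = (j+1)+dj from by ring]
      rw [if_pos hc1, if_pos rfl, hf]
      congr 2
      omega
    · have h' : ((i', j'+1, k') : ℕ × ℤ × ℤ) ≠ ((i+di : ℕ), (j+1)+dj, k+dk) := by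
        intro hh
        simp only [Prod.mk.injEq] at hh
        exact h (by simp only [Prod.mk.injEq]; exact ⟨hh.1, by omega, hh.2.2⟩)
      rw [if_neg h', if_neg h, mul_zero]
  · intro i j k i' j' k'
    rw [ent_apply_single S _ _ _ (hS i j (k+1)), ent_apply_single S _ _ _ (hS i j k)]
    by_cases h : (i', j', k') = ((i+di : ℕ), j+dj, k+dk)
    · simp only [Prod.mk.injEq] at h
      obtain ⟨h1, h2, h3⟩ := h
      subst h1; subst h2; subst h3
      have hc1 : ((i+di : ℕ), j+dj, (k+dk)+1) = ((i+di : ℕ), j+dj, (k+1)+dk) := by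
        rw [show (k+dk)+1 = (k+1)+dk from by ring]
      rw [if_pos hc1, if_pos rfl]
    · have h' : ((i', j', k'+1) : ℕ × ℤ × ℤ) ≠ ((i+di : ℕ), j+dj, (k+1)+dk) := by
        intro hh
        simp only [Prod.mk.injEq] at hh
        exact h (by simp only [Prod.mk.injEq]; exact ⟨hh.1, hh.2.1, by omega⟩)
      rw [if_neg h', if_neg h]

end UqAux

open UqAux

set_option maxHeartbeats 2000000

/-- if `θ = arg(q)/π` is irrational, then the center of the C*-algebra `𝒜`
generated by `A`, `B`, `D` (the image of `C(U_q(2))` under the faithful representation) is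
trivial: every `T ∈ 𝒜` commuting with all of `𝒜` is a scalar multiple of the identity. -/
theorem center_trivial_of_irrational
    (q : ℂ) (hq0 : 0 < ‖q‖) (hq1 : ‖q‖ < 1)
    (θ : ℝ) (hθ : θ = Complex.arg q / Real.pi) (hirr : Irrational θ)
    (A B D : UqH →L[ℂ] UqH)
    (hA : ∀ (i : ℕ) (j k : ℤ),
      A (e i j k) = ((Real.sqrt (1 - ‖q‖ ^ (2 * (i + 1))) : ℝ) : ℂ) • e (i + 1) j k)
    (hB : ∀ (i : ℕ) (j k : ℤ), B (e i j k) = (q ^ i) • e i (j + 1) k)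
    (hD : ∀ (i : ℕ) (j k : ℤ),
      D (e i j k) = Complex.exp (-(2 * (Real.pi : ℂ) * (θ : ℂ) * (j : ℂ)) * Complex.I) • e i j (k + 1))
    (hAs : ∀ (i : ℕ) (j k : ℤ),
      (star A) (e i j k) = ((Real.sqrt (1 - ‖q‖ ^ (2 * i)) : ℝ) : ℂ) • e (i - 1) j k)
    (hBs : ∀ (i : ℕ) (j k : ℤ), (star B) (e i j k) = ((starRingEnd ℂ) q ^ i) • e i (j - 1) k)
    (hDs : ∀ (i : ℕ) (j k : ℤ),
      (star D) (e i j k) = Complex.exp ((2 * (Real.pi : ℂ) * (θ : ℂ) * (j : ℂ)) * Complex.I) • e i j (k - 1))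
    (𝒜 : StarSubalgebra ℂ (UqH →L[ℂ] UqH))
    (h𝒜 : 𝒜 = (StarAlgebra.adjoin ℂ ({A, B, D} : Set (UqH →L[ℂ] UqH))).topologicalClosure) :
    ∀ T ∈ 𝒜, (∀ S ∈ 𝒜, T * S = S * T) → ∃ c : ℂ, T = c • (1 : UqH →L[ℂ] UqH) := by
  classical
  intro T hT hTcomm
  have hqne : q ≠ 0 := by
    intro h; rw [h] at hq0; simp at hq0
  set lam : ℂ := Complex.exp (-(2 * (Real.pi : ℂ) * (θ : ℂ)) * Complex.I) with hlamdef
  have hlamne : lam ≠ 0 := Complex.exp_ne_zero _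
  have hzpow : ∀ j : ℤ,
      Complex.exp (-(2 * (Real.pi : ℂ) * (θ : ℂ) * (j : ℂ)) * Complex.I) = lam ^ j := by
    intro j
    rw [hlamdef, ← Complex.exp_int_mul]
    congr 1
    ring
  have hlam_abs : ‖lam‖ = 1 := by
    rw [hlamdef, Complex.norm_exp]
    norm_num [Complex.mul_I_re]
  have hlam_one : ∀ n : ℤ, lam ^ n = 1 → n = 0 := by
    intro n h
    rw [hlamdef, ← Complex.exp_int_mul, Complex.exp_eq_one_iff] at h
    obtain ⟨M, hM⟩ := h
    have hne2 : (2 * (Real.pi : ℂ) * Complex.I) ≠ 0 := by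
      simp [Real.pi_ne_zero, Complex.I_ne_zero]
    have h2 : ((-(θ * n) : ℝ) : ℂ) * (2 * (Real.pi : ℂ) * Complex.I)
        = (M : ℂ) * (2 * (Real.pi : ℂ) * Complex.I) := by
      push_cast
      linear_combination hM
    have h3 : ((-(θ * n) : ℝ) : ℂ) = (M : ℂ) := mul_right_cancel₀ hne2 h2
    have h4 : -(θ * n) = (M : ℝ) := by exact_mod_cast h3
    by_contra hn
    apply hirr
    refine ⟨(-M : ℚ) / (n : ℚ), ?_⟩
    have hnR : (n : ℝ) ≠ 0 := Int.cast_ne_zero.mpr hn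
    push_cast
    field_simp
    linarith [h4]
  have hlam_inj : ∀ a b : ℤ, lam ^ a = lam ^ b → a = b := by
    intro a b h
    have h1 : lam ^ (a - b) = 1 := by
      rw [zpow_sub₀ hlamne, h, div_self (zpow_ne_zero _ hlamne)]
    have := hlam_one _ h1
    omega
  have hpow_inj : ∀ a b : ℕ, ‖q‖ ^ a = ‖q‖ ^ b → a = b := by
    intro a b h
    by_contra hab
    rcases Nat.lt_or_ge a b with hl | hge
    · have := pow_lt_pow_right_of_lt_one₀ hq0 hq1 hl
      rw [h] at this
      exact lt_irrefl _ this
    · have hl : b < a := by omega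
      have := pow_lt_pow_right_of_lt_one₀ hq0 hq1 hl
      rw [h] at this
      exact lt_irrefl _ this
  have hcoef : ∀ (ii i' : ℕ) (m : ℤ), q ^ ii * lam ^ m = q ^ i' → ii = i' ∧ m = 0 := by
    intro ii i' m h
    have habs : ‖q‖ ^ ii * 1 = ‖q‖ ^ i' := by
      have h1 := congrArg norm h
      rwa [norm_mul, norm_pow, norm_pow, norm_zpow, hlam_abs, one_zpow] at h1
    have hii : ii = i' := hpow_inj _ _ (by simpa using habs)
    subst hii
    have hq2 : q ^ ii ≠ 0 := pow_ne_zero _ hqne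
    have hl1 : lam ^ m = 1 := by
      have := h.trans (mul_one (q ^ ii)).symm
      exact mul_left_cancel₀ hq2 this
    exact ⟨rfl, hlam_one _ hl1⟩
  have hcne : ∀ i : ℕ, ((Real.sqrt (1 - ‖q‖ ^ (2 * (i + 1))) : ℝ) : ℂ) ≠ 0 := by
    intro i
    have h1 : ‖q‖ ^ (2 * (i + 1)) < 1 :=
      pow_lt_one₀ (norm_nonneg q) hq1 (by omega)
    have h2 : (0 : ℝ) < Real.sqrt (1 - ‖q‖ ^ (2 * (i + 1))) :=
      Real.sqrt_pos.mpr (by linarith)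
    exact_mod_cast ne_of_gt h2
  -- memberships
  have hmemA : A ∈ 𝒜 := by
    rw [h𝒜]
    exact (StarAlgebra.adjoin ℂ _).le_topologicalClosure
      (StarAlgebra.subset_adjoin ℂ _ (by simp))
  have hmemB : B ∈ 𝒜 := by
    rw [h𝒜]
    exact (StarAlgebra.adjoin ℂ _).le_topologicalClosure
      (StarAlgebra.subset_adjoin ℂ _ (by simp))
  have hmemD : D ∈ 𝒜 := by
    rw [h𝒜]
    exact (StarAlgebra.adjoin ℂ _).le_topologicalClosure
      (StarAlgebra.subset_adjoin ℂ _ (by simp))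
  have hTB : ∀ x : UqH, T (B x) = B (T x) := by
    intro x
    have h := hTcomm B hmemB
    calc T (B x) = (T * B) x := rfl
    _ = (B * T) x := by rw [h]
    _ = B (T x) := rfl
  have hTD : ∀ x : UqH, T (D x) = D (T x) := by
    intro x
    have h := hTcomm D hmemD
    calc T (D x) = (T * D) x := rfl
    _ = (D * T) x := by rw [h]
    _ = D (T x) := rfl
  have hTA : ∀ x : UqH, T (A x) = A (T x) := by
    intro x
    have h := hTcomm A hmemA
    calc T (A x) = (T * A) x := rfl
    _ = (A * T) x := by rw [h]
    _ = A (T x) := rfl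
  -- coordinate formulas
  have hBc : ∀ (x : UqH) (i : ℕ) (j k : ℤ),
      (B x : ∀ _ : ℕ × ℤ × ℤ, ℂ) (i, j + 1, k) = q ^ i * x (i, j, k) := by
    intro x i j k
    exact coord_formula B (fun p => q ^ p.1) (fun p => (p.1, p.2.1 + 1, p.2.2))
      (by rintro ⟨a, b, c⟩ ⟨a', b', c'⟩ h
          simp only [Prod.mk.injEq] at h ⊢
          exact ⟨h.1, by omega, h.2.2⟩)
      (by rintro ⟨a, b, c⟩; exact hB a b c) x (i, j, k)
  have hDc : ∀ (x : UqH) (i : ℕ) (j k : ℤ),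
      (D x : ∀ _ : ℕ × ℤ × ℤ, ℂ) (i, j, k + 1) = lam ^ j * x (i, j, k) := by
    intro x i j k
    exact coord_formula D (fun p => lam ^ p.2.1) (fun p => (p.1, p.2.1, p.2.2 + 1))
      (by rintro ⟨a, b, c⟩ ⟨a', b', c'⟩ h
          simp only [Prod.mk.injEq] at h ⊢
          exact ⟨h.1, h.2.1, by omega⟩)
      (by rintro ⟨a, b, c⟩
          have h := hD a b c
          rw [hzpow b] at h
          exact h) x (i, j, k)
  have hAc : ∀ (x : UqH) (i : ℕ) (j k : ℤ),
      (A x : ∀ _ : ℕ × ℤ × ℤ, ℂ) (i + 1, j, k)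
        = ((Real.sqrt (1 - ‖q‖ ^ (2 * (i + 1))) : ℝ) : ℂ) * x (i, j, k) := by
    intro x i j k
    exact coord_formula A
      (fun p => ((Real.sqrt (1 - ‖q‖ ^ (2 * (p.1 + 1))) : ℝ) : ℂ))
      (fun p => (p.1 + 1, p.2.1, p.2.2))
      (by rintro ⟨a, b, c⟩ ⟨a', b', c'⟩ h
          simp only [Prod.mk.injEq] at h ⊢
          exact ⟨by omega, h.2.1, h.2.2⟩)
      (by rintro ⟨a, b, c⟩; exact hA a b c) x (i, j, k)
  -- entry commutation relations
  have hcm1 : ∀ (i : ℕ) (j k : ℤ) (i' : ℕ) (j' k' : ℤ),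
      q ^ i * ent T (i, j + 1, k) (i', j' + 1, k')
        = q ^ i' * ent T (i, j, k) (i', j', k') := by
    intro i j k i' j' k'
    have h := congrArg (fun y : UqH => (y : ∀ _ : ℕ × ℤ × ℤ, ℂ) (i', j' + 1, k'))
      (hTB (lp.single 2 (i, j, k) 1))
    simp only at h
    rw [show B (lp.single 2 (i, j, k) 1) = q ^ i • lp.single 2 (i, j + 1, k) 1 from hB i j k,
      map_smul, lp.coeFn_smul, Pi.smul_apply, smul_eq_mul,
      hBc (T (lp.single 2 (i, j, k) 1)) i' j' k'] at h
    exact h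
  have hcm2 : ∀ (i : ℕ) (j k : ℤ) (i' : ℕ) (j' k' : ℤ),
      lam ^ j * ent T (i, j, k + 1) (i', j', k' + 1)
        = lam ^ j' * ent T (i, j, k) (i', j', k') := by
    intro i j k i' j' k'
    have h := congrArg (fun y : UqH => (y : ∀ _ : ℕ × ℤ × ℤ, ℂ) (i', j', k' + 1))
      (hTD (lp.single 2 (i, j, k) 1))
    simp only at h
    have hD' : D (lp.single 2 (i, j, k) 1) = lam ^ j • lp.single 2 (i, j, k + 1) 1 := by
      have h2 := hD i j k
      rw [hzpow j] at h2
      exact h2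
    rw [hD', map_smul, lp.coeFn_smul, Pi.smul_apply, smul_eq_mul,
      hDc (T (lp.single 2 (i, j, k) 1)) i' j' k'] at h
    exact h
  have hcm3 : ∀ (i : ℕ) (j k : ℤ) (i' : ℕ) (j' k' : ℤ),
      ((Real.sqrt (1 - ‖q‖ ^ (2 * (i + 1))) : ℝ) : ℂ)
          * ent T (i + 1, j, k) (i' + 1, j', k')
        = ((Real.sqrt (1 - ‖q‖ ^ (2 * (i' + 1))) : ℝ) : ℂ)
          * ent T (i, j, k) (i', j', k') := by
    intro i j k i' j' k'
    have h := congrArg (fun y : UqH => (y : ∀ _ : ℕ × ℤ × ℤ, ℂ) (i' + 1, j', k'))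
      (hTA (lp.single 2 (i, j, k) 1))
    simp only at h
    rw [show A (lp.single 2 (i, j, k) 1)
        = ((Real.sqrt (1 - ‖q‖ ^ (2 * (i + 1))) : ℝ) : ℂ) • lp.single 2 (i + 1, j, k) 1
        from hA i j k,
      map_smul, lp.coeFn_smul, Pi.smul_apply, smul_eq_mul,
      hAc (T (lp.single 2 (i, j, k) 1)) i' j' k'] at h
    exact h
  -- conjugation fact
  have hconjlam : (starRingEnd ℂ) lam = lam⁻¹ := by
    rw [hlamdef, ← Complex.exp_conj, ← Complex.exp_neg]
    congr 1
    simp only [map_mul, map_neg, Complex.conj_I, Complex.conj_ofReal, map_ofNat]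
    ring
  have hconj : ∀ n : ℤ, (starRingEnd ℂ) (lam ^ n) = lam ^ (-n) := by
    intro n
    rw [map_zpow₀, hconjlam, inv_zpow, ← zpow_neg]
  -- the invariant Q
  have hQ : ∀ S ∈ 𝒜,
      (∀ (i : ℕ) (j k : ℤ) (i' : ℕ) (j' k' : ℤ),
        ent S (i, j + 1, k) (i', j' + 1, k') = lam ^ (k' - k) * ent S (i, j, k) (i', j', k'))
      ∧ (∀ (i : ℕ) (j k : ℤ) (i' : ℕ) (j' k' : ℤ),
        ent S (i, j, k + 1) (i', j', k' + 1) = ent S (i, j, k) (i', j', k')) := by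
    have hclosed : IsClosed {S : UqH →L[ℂ] UqH |
        (∀ (i : ℕ) (j k : ℤ) (i' : ℕ) (j' k' : ℤ),
          ent S (i, j + 1, k) (i', j' + 1, k') = lam ^ (k' - k) * ent S (i, j, k) (i', j', k'))
        ∧ (∀ (i : ℕ) (j k : ℤ) (i' : ℕ) (j' k' : ℤ),
          ent S (i, j, k + 1) (i', j', k' + 1) = ent S (i, j, k) (i', j', k'))} := by
      rw [Set.setOf_and]
      apply IsClosed.inter
      · rw [Set.setOf_forall]
        refine isClosed_iInter fun i => ?_
        rw [Set.setOf_forall]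
        refine isClosed_iInter fun j => ?_
        rw [Set.setOf_forall]
        refine isClosed_iInter fun k => ?_
        rw [Set.setOf_forall]
        refine isClosed_iInter fun i' => ?_
        rw [Set.setOf_forall]
        refine isClosed_iInter fun j' => ?_
        rw [Set.setOf_forall]
        refine isClosed_iInter fun k' => ?_
        exact isClosed_eq (continuous_ent _ _) (continuous_const.mul (continuous_ent _ _))
      · rw [Set.setOf_forall]
        refine isClosed_iInter fun i => ?_
        rw [Set.setOf_forall]
        refine isClosed_iInter fun j => ?_
        rw [Set.setOf_forall]
        refine isClosed_iInter fun k => ?_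
        rw [Set.setOf_forall]
        refine isClosed_iInter fun i' => ?_
        rw [Set.setOf_forall]
        refine isClosed_iInter fun j' => ?_
        rw [Set.setOf_forall]
        refine isClosed_iInter fun k' => ?_
        exact isClosed_eq (continuous_ent _ _) (continuous_ent _ _)
    have hadj : ∀ S, S ∈ StarAlgebra.adjoin ℂ ({A, B, D} : Set (UqH →L[ℂ] UqH)) →
        (∀ (i : ℕ) (j k : ℤ) (i' : ℕ) (j' k' : ℤ),
          ent S (i, j + 1, k) (i', j' + 1, k') = lam ^ (k' - k) * ent S (i, j, k) (i', j', k'))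
        ∧ (∀ (i : ℕ) (j k : ℤ) (i' : ℕ) (j' k' : ℤ),
          ent S (i, j, k + 1) (i', j', k' + 1) = ent S (i, j, k) (i', j', k')) := by
      intro S hS
      induction hS using StarAlgebra.adjoin_induction with
      | mem x hx =>
        rcases hx with rfl | rfl | rfl
        · -- A
          exact Qgen lam x 1 0 0 (fun i _ => ((Real.sqrt (1 - ‖q‖ ^ (2 * (i + 1))) : ℝ) : ℂ))
            (fun i j => by rw [zpow_zero, one_mul])
            (fun i j k => by simpa [e] using hA i j k) hlamne
        · -- B
          exact Qgen lam x 0 1 0 (fun i _ => q ^ i)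
            (fun i j => by rw [zpow_zero, one_mul])
            (fun i j k => by simpa [e] using hB i j k) hlamne
        · -- D
          refine Qgen lam x 0 0 1 (fun _ j => lam ^ j)
            (fun i j => by
              show lam ^ (j + 1) = lam ^ (1 : ℤ) * lam ^ j
              rw [zpow_add₀ hlamne, zpow_one, mul_comm])
            (fun i j k => ?_) hlamne
          have h := hD i j k
          rw [hzpow j] at h
          simpa [e] using h
      | algebraMap r =>
        refine Qgen lam _ 0 0 0 (fun _ _ => r)
          (fun i j => by rw [zpow_zero, one_mul])
          (fun i j k => ?_) hlamne
        simp only [Algebra.algebraMap_eq_smul_one, ContinuousLinearMap.smul_apply,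
          ContinuousLinearMap.one_apply]
        simp
      | add x y hx hy ihx ihy =>
        constructor
        · intro i j k i' j' k'
          rw [ent_add, ent_add, ihx.1, ihy.1]
          ring
        · intro i j k i' j' k'
          rw [ent_add, ent_add, ihx.2, ihy.2]
      | mul x y hx hy ihx ihy =>
        let σj : (ℕ × ℤ × ℤ) ≃ (ℕ × ℤ × ℤ) :=
          ⟨fun r => (r.1, r.2.1 + 1, r.2.2), fun r => (r.1, r.2.1 - 1, r.2.2),
            by rintro ⟨a, b, c⟩; simp, by rintro ⟨a, b, c⟩; simp⟩
        let σk : (ℕ × ℤ × ℤ) ≃ (ℕ × ℤ × ℤ) :=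
          ⟨fun r => (r.1, r.2.1, r.2.2 + 1), fun r => (r.1, r.2.1, r.2.2 - 1),
            by rintro ⟨a, b, c⟩; simp, by rintro ⟨a, b, c⟩; simp⟩
        constructor
        · intro i j k i' j' k'
          rw [ent_mul, ent_mul,
            ← Equiv.tsum_eq σj (fun r => ent x r (i', j' + 1, k') * ent y (i, j + 1, k) r),
            ← tsum_mul_left]
          apply tsum_congr
          rintro ⟨a, b, c⟩
          show ent x (a, b + 1, c) (i', j' + 1, k') * ent y (i, j + 1, k) (a, b + 1, c)
            = lam ^ (k' - k) * (ent x (a, b, c) (i', j', k') * ent y (i, j, k) (a, b, c))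
          rw [ihx.1, ihy.1]
          have hmerge : lam ^ (k' - c) * lam ^ (c - k) = lam ^ (k' - k) := by
            rw [← zpow_add₀ hlamne]
            congr 1
            ring
          rw [← hmerge]
          ring
        · intro i j k i' j' k'
          rw [ent_mul, ent_mul,
            ← Equiv.tsum_eq σk (fun r => ent x r (i', j', k' + 1) * ent y (i, j, k + 1) r)]
          apply tsum_congr
          rintro ⟨a, b, c⟩
          show ent x (a, b, c + 1) (i', j', k' + 1) * ent y (i, j, k + 1) (a, b, c + 1)
            = ent x (a, b, c) (i', j', k') * ent y (i, j, k) (a, b, c)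
          rw [ihx.2, ihy.2]
      | star x hx ih =>
        constructor
        · intro i j k i' j' k'
          rw [ent_star, ent_star, ih.1 i' j' k' i j k, map_mul, hconj, neg_sub]
        · intro i j k i' j' k'
          rw [ent_star, ent_star, ih.2 i' j' k' i j k]
    intro S hS
    rw [h𝒜] at hS
    exact closure_minimal hadj hclosed hS
  obtain ⟨hQ1, hQ2⟩ := hQ T hT
  -- off-diagonal entries vanish
  have hoff : ∀ (i : ℕ) (j k : ℤ) (i' : ℕ) (j' k' : ℤ),
      ((i, j, k) : ℕ × ℤ × ℤ) ≠ (i', j', k') → ent T (i, j, k) (i', j', k') = 0 := by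
    intro i j k i' j' k' hne
    by_cases hj : j = j'
    · subst hj
      -- use B-commutation and Q1
      have h1 := hcm1 i j k i' j k'
      rw [hQ1 i j k i' j k'] at h1
      -- (q^i * lam^(k'-k) - q^i') * t = 0
      have h2 : (q ^ i * lam ^ (k' - k) - q ^ i') * ent T (i, j, k) (i', j, k') = 0 := by
        rw [sub_mul]
        rw [← mul_assoc] at h1
        rw [h1]
        ring
      rcases mul_eq_zero.mp h2 with h3 | h3
      · exfalso
        have h4 : q ^ i * lam ^ (k' - k) = q ^ i' := by linear_combination h3
        obtain ⟨hii, hkk⟩ := hcoef i i' (k' - k) h4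
        have hkk' : k = k' := by omega
        exact hne (by rw [hii, hkk'])
      · exact h3
    · -- j ≠ j' : use D-commutation and Q2
      have hX : ∀ K : ℤ, ent T (i, j, k) (i', j', K + 1) = 0 := by
        intro K
        have h1 := hcm2 i j k i' j' (K + 1)
        rw [hQ2 i j k i' j' (K + 1)] at h1
        have h2 : (lam ^ j - lam ^ j') * ent T (i, j, k) (i', j', K + 1) = 0 := by
          rw [sub_mul, h1]; ring
        rcases mul_eq_zero.mp h2 with h3 | h3
        · exact absurd (hlam_inj j j' (by linear_combination h3)) hj
        · exact h3
      have h4 := hX (k' - 1)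
      rwa [sub_add_cancel] at h4
  -- diagonal entries are constant
  have hdiagi : ∀ (i : ℕ) (j k : ℤ),
      ent T (i, j, k) (i, j, k) = ent T (0, j, k) (0, j, k) := by
    intro i j k
    induction i with
    | zero => rfl
    | succ n ih =>
      have h := hcm3 n j k n j k
      have h2 := mul_left_cancel₀ (hcne n) h
      rw [h2, ih]
  have hdiagj : ∀ (j k : ℤ), ent T (0, j, k) (0, j, k) = ent T (0, 0, k) (0, 0, k) := by
    have hstep : ∀ (j k : ℤ), ent T (0, j + 1, k) (0, j + 1, k) = ent T (0, j, k) (0, j, k) := by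
      intro j k
      have h := hcm1 0 j k 0 j k
      simpa using h
    intro j k
    induction j using Int.induction_on with
    | zero => rfl
    | succ n ih => rw [hstep n k, ih]
    | pred n ih => rw [← ih, ← hstep (-n - 1) k]; norm_num
  have hdiagk : ∀ (k : ℤ), ent T (0, 0, k) (0, 0, k) = ent T (0, 0, 0) (0, 0, 0) := by
    have hstep : ∀ (k : ℤ), ent T (0, 0, k + 1) (0, 0, k + 1) = ent T (0, 0, k) (0, 0, k) :=
      fun k => hQ2 0 0 k 0 0 k
    intro k
    induction k using Int.induction_on with
    | zero => rfl
    | succ n ih => rw [hstep n, ih]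
    | pred n ih => rw [← ih, ← hstep (-n - 1)]; norm_num
  have hdiag : ∀ (i : ℕ) (j k : ℤ),
      ent T (i, j, k) (i, j, k) = ent T (0, 0, 0) (0, 0, 0) := by
    intro i j k
    rw [hdiagi, hdiagj, hdiagk]
  -- assembly
  refine ⟨ent T (0, 0, 0) (0, 0, 0), ?_⟩
  have hsingle : ∀ p : ℕ × ℤ × ℤ,
      T (lp.single 2 p 1) = ent T (0, 0, 0) (0, 0, 0) • lp.single 2 p 1 := by
    rintro ⟨i, j, k⟩
    apply lp.ext
    funext p'
    rcases p' with ⟨i', j', k'⟩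
    rw [lp.coeFn_smul, Pi.smul_apply, smul_eq_mul]
    by_cases h : ((i', j', k') : ℕ × ℤ × ℤ) = (i, j, k)
    · rw [h, lp.single_apply_self, mul_one]
      exact hdiag i j k
    · rw [lp.single_apply_ne _ _ _ h, mul_zero]
      exact hoff i j k i' j' k' (fun hh => h (by rw [hh]))
  apply ContinuousLinearMap.ext
  intro x
  have h1 : HasSum (fun p : ℕ × ℤ × ℤ => lp.single 2 p (x p)) x :=
    lp.hasSum_single (by norm_num) x
  have h2 : HasSum (fun p : ℕ × ℤ × ℤ => T (lp.single 2 p (x p))) (T x) := h1.mapL T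
  have h3 : (fun p : ℕ × ℤ × ℤ => T (lp.single 2 p (x p)))
      = fun p => ent T (0, 0, 0) (0, 0, 0) • lp.single 2 p (x p) := by
    funext p
    have hsm : lp.single 2 p (x p) = x p • (lp.single 2 p 1 : UqH) := by
      rw [← lp.single_smul]; norm_num
    rw [hsm, map_smul, hsingle p, smul_comm]
  rw [h3] at h2
  have h4 : HasSum (fun p : ℕ × ℤ × ℤ => ent T (0, 0, 0) (0, 0, 0) • lp.single 2 p (x p))
      (ent T (0, 0, 0) (0, 0, 0) • x) := h1.const_smul _
  have h5 := h2.unique h4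
  rw [h5]
  simp
end
end

section
/- Suppose q is not real and θ = (1/π)·arg(q) is irrational, and let q′ ∈ ℝ with 0 < |q′| < 1. Then the C*-algebras 𝒜_q and 𝒜_{q′} are non-isomorphic: there is no star-algebra isomorphism (over ℂ) between 𝒜_q and 𝒜_{q′}. -/
open scoped InnerProductSpace
noncomputable section

/- ### Auxiliary machinery -/

abbrev Idx : Type := ℕ × ℤ × ℤ

def sing (a : Idx) : UqH := lp.single 2 a 1

lemma e_eq_sing (i : ℕ) (j k : ℤ) : e i j k = sing (i, j, k) := rfl

lemma sing_apply (a b : Idx) : (sing a : ∀ _ : Idx, ℂ) b = if b = a then 1 else 0 := by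
  rw [sing, lp.single_apply]
  split_ifs with h
  · subst h; simp [Pi.single_apply]
  · simp [Pi.single_apply, h]

lemma coord_eq_inner (v : UqH) (a : Idx) : ⟪sing a, v⟫_ℂ = v a := by
  rw [sing, lp.inner_single_left]
  simp [RCLike.inner_apply]

lemma inner_sing_sing (a b : Idx) : ⟪sing a, sing b⟫_ℂ = if a = b then 1 else 0 := by
  rw [coord_eq_inner, sing_apply]

lemma vec_ext {v w : UqH} (h : ∀ a : Idx, ⟪sing a, v⟫_ℂ = ⟪sing a, w⟫_ℂ) : v = w := by
  apply lp.ext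
  funext a
  have := h a
  rwa [coord_eq_inner, coord_eq_inner] at this

lemma sing_smul (a : Idx) (c : ℂ) : lp.single 2 a c = c • sing a := by
  apply lp.ext
  funext b
  rw [lp.single_apply]
  have h0 : ((c • sing a : UqH) : ∀ _ : Idx, ℂ) b = c * (sing a : ∀ _ : Idx, ℂ) b := rfl
  rw [h0, sing_apply]
  split_ifs with h
  · simp [Pi.single_apply, h]
  · simp [Pi.single_apply, h]

lemma op_ext {T₁ T₂ : UqH →L[ℂ] UqH} (h : ∀ a : Idx, T₁ (sing a) = T₂ (sing a)) : T₁ = T₂ := by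
  apply ContinuousLinearMap.ext
  intro v
  have hv : HasSum (fun a : Idx => lp.single 2 a (v a)) v := lp.hasSum_single (by norm_num) v
  have h1 : HasSum (fun a : Idx => T₁ (lp.single 2 a (v a))) (T₁ v) := hv.mapL T₁
  have h2 : HasSum (fun a : Idx => T₂ (lp.single 2 a (v a))) (T₂ v) := hv.mapL T₂
  refine h1.unique ?_
  convert h2 using 2 with a
  rw [sing_smul, map_smul, map_smul, h a]

lemma smul_sing_cancel {c₁ c₂ : ℂ} {a : Idx} (h : c₁ • sing a = c₂ • sing a) : c₁ = c₂ := by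
  have h2 := congrArg (fun v => ⟪sing a, v⟫_ℂ) h
  simp only [inner_smul_right, inner_sing_sing] at h2
  simpa using h2

/- ### Adjoints via basis formulas -/

lemma adj_on_basis (X : UqH →L[ℂ] UqH) (τ : Idx → Idx) (hτ : Function.Injective τ)
    (c : Idx → ℂ) (hX : ∀ a, X (sing a) = c a • sing (τ a)) (a₀ : Idx) :
    ContinuousLinearMap.adjoint X (sing (τ a₀)) = (starRingEnd ℂ) (c a₀) • sing a₀ := by
  apply vec_ext
  intro b
  rw [ContinuousLinearMap.adjoint_inner_right, hX b, inner_smul_left, inner_smul_right,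
    inner_sing_sing, inner_sing_sing]
  by_cases h : b = a₀
  · subst h; simp
  · rw [if_neg (fun hc => h (hτ hc)), if_neg h, mul_zero, mul_zero]

lemma adj_zero (X : UqH →L[ℂ] UqH) (τ : Idx → Idx) (c : Idx → ℂ)
    (hX : ∀ a, X (sing a) = c a • sing (τ a)) (a : Idx) (ha : ∀ b, τ b ≠ a) :
    ContinuousLinearMap.adjoint X (sing a) = 0 := by
  apply vec_ext
  intro b
  rw [ContinuousLinearMap.adjoint_inner_right, hX b, inner_smul_left, inner_sing_sing,
    if_neg (ha b), mul_zero, inner_zero_right]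

/- ### Commutation from basis formulas -/

lemma comm_of_basis {X Y : UqH →L[ℂ] UqH} {cX cY : Idx → ℂ} {τX τY : Idx → Idx}
    (hX : ∀ a, X (sing a) = cX a • sing (τX a)) (hY : ∀ a, Y (sing a) = cY a • sing (τY a))
    (hττ : ∀ a, τX (τY a) = τY (τX a)) (hc : ∀ a, cY a * cX (τY a) = cX a * cY (τX a)) :
    X * Y = Y * X := by
  apply op_ext
  intro a
  rw [ContinuousLinearMap.mul_apply, ContinuousLinearMap.mul_apply, hY, hX, map_smul, map_smul,
    hX, hY, smul_smul, smul_smul, hc a, hττ a]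

lemma comm_apply {X Y : UqH →L[ℂ] UqH} (h : X * Y = Y * X) (v : UqH) : X (Y v) = Y (X v) := by
  have := DFunLike.congr_fun h v
  simpa [ContinuousLinearMap.mul_apply] using this

/- ### The phase function -/

def Ph (t : ℝ) (j : ℤ) : ℂ :=
  Complex.exp (-(2 * (Real.pi : ℂ) * (t : ℂ) * (j : ℂ)) * Complex.I)

lemma Ph_norm (t : ℝ) (j : ℤ) : ‖Ph t j‖ = 1 := by
  rw [Ph]
  have : (-(2 * (Real.pi : ℂ) * (t : ℂ) * (j : ℂ))) = ((-(2 * Real.pi * t * (j:ℝ)) : ℝ) : ℂ) := by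
    push_cast; ring
  rw [this, Complex.norm_exp_ofReal_mul_I]

lemma Ph_ne_zero (t : ℝ) (j : ℤ) : Ph t j ≠ 0 := Complex.exp_ne_zero _

lemma Ph_add (t : ℝ) (j j' : ℤ) : Ph t (j + j') = Ph t j * Ph t j' := by
  rw [Ph, Ph, Ph, ← Complex.exp_add]
  congr 1
  push_cast
  ring

lemma Ph_zero (t : ℝ) : Ph t 0 = 1 := by
  rw [Ph]; push_cast; simp

lemma conj_Ph (t : ℝ) (j : ℤ) : (starRingEnd ℂ) (Ph t j) = Ph t (-j) := by
  have h1 : Ph t j * Ph t (-j) = 1 := by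
    rw [← Ph_add, add_neg_cancel, Ph_zero]
  have h2 : Ph t j * (starRingEnd ℂ) (Ph t j) = 1 := by
    rw [Complex.mul_conj]
    norm_cast
    rw [← Complex.sq_norm]
    norm_cast
    rw [Ph_norm]
    norm_num
  calc (starRingEnd ℂ) (Ph t j) = (Ph t (-j) * Ph t j) * (starRingEnd ℂ) (Ph t j) := by
        rw [mul_comm (Ph t (-j)), h1, one_mul]
    _ = Ph t (-j) * (Ph t j * (starRingEnd ℂ) (Ph t j)) := by ring
    _ = Ph t (-j) := by rw [h2, mul_one]

lemma Ph_inj {t : ℝ} (hirr : Irrational t) {j j' : ℤ} (h : Ph t j = Ph t j') : j = j' := by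
  by_contra hne
  have h1 : Ph t (j - j') = 1 := by
    have h0 := congrArg (· * Ph t (-j')) h
    rw [← Ph_add, ← Ph_add, add_neg_cancel, Ph_zero] at h0
    rwa [sub_eq_add_neg]
  rw [Ph, Complex.exp_eq_one_iff] at h1
  obtain ⟨n, hn⟩ := h1
  have hI : (-(2 * (Real.pi : ℂ) * (t : ℂ) * ((j - j' : ℤ) : ℂ))) = (n : ℂ) * (2 * Real.pi) := by
    rw [show ((n:ℂ) * (2 * (Real.pi:ℂ) * Complex.I)) = ((n:ℂ) * (2 * (Real.pi:ℂ))) * Complex.I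
      by ring] at hn
    exact mul_right_cancel₀ Complex.I_ne_zero hn
  have hR : -(2 * Real.pi * t * ((j - j' : ℤ) : ℝ)) = (n : ℝ) * (2 * Real.pi) := by
    exact_mod_cast hI
  have hm : ((j - j' : ℤ) : ℝ) * t = ((-n : ℤ) : ℝ) := by
    have hπ : (2 * Real.pi) ≠ 0 := by positivity
    have h3 : 2 * Real.pi * (((j - j':ℤ) : ℝ) * t) = 2 * Real.pi * (((-n : ℤ)):ℝ) := by
      push_cast at hR ⊢
      ring_nf at hR ⊢
      linarith [hR]
    exact mul_left_cancel₀ hπ h3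
  have hirr2 : Irrational (((j - j' : ℤ) : ℝ) * t) := hirr.intCast_mul (by omega)
  exact hirr2.ne_int (-n) hm

/- ### Weighted shift operators -/

def msFun (σ : Idx ≃ Idx) (m : Idx → ℂ) (v : UqH) : ∀ _ : Idx, ℂ := fun a => m a * v (σ a)

lemma msFun_mem (σ : Idx ≃ Idx) (m : Idx → ℂ) (hm : ∀ a, ‖m a‖ = 1) (v : UqH) :
    Memℓp (msFun σ m v) 2 := by
  apply memℓp_gen
  have h2 : ((2 : ENNReal)).toReal = (2:ℝ) := by norm_num
  have hs : Summable (fun b : Idx => ‖v b‖ ^ (2:ℝ)) := by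
    have := (lp.memℓp v).summable (p := 2) (by norm_num [h2])
    rwa [h2] at this
  have h3 : (fun a : Idx => ‖msFun σ m v a‖ ^ (2:ENNReal).toReal)
      = (fun b : Idx => ‖v b‖ ^ (2:ℝ)) ∘ σ := by
    funext a
    simp [msFun, norm_mul, hm a, h2]
  rw [h3]
  exact (σ.summable_iff (f := fun b : Idx => ‖v b‖ ^ (2:ℝ))).2 hs

def msPre (σ : Idx ≃ Idx) (m : Idx → ℂ) (hm : ∀ a, ‖m a‖ = 1) : UqH →ₗ[ℂ] UqH where
  toFun v := ⟨msFun σ m v, msFun_mem σ m hm v⟩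
  map_add' v w := by
    apply lp.ext
    funext a
    show m a * (v + w) (σ a) = msFun σ m v a + msFun σ m w a
    simp [msFun, mul_add]
  map_smul' c v := by
    apply lp.ext
    funext a
    show m a * (c • v) (σ a) = c * msFun σ m v a
    simp [msFun]
    ring

lemma msPre_norm (σ : Idx ≃ Idx) (m : Idx → ℂ) (hm : ∀ a, ‖m a‖ = 1) (v : UqH) :
    ‖msPre σ m hm v‖ = ‖v‖ := by
  have h2 : (0:ℝ) < ((2 : ENNReal)).toReal := by norm_num
  have key : ‖msPre σ m hm v‖ ^ (2:ENNReal).toReal = ‖v‖ ^ (2:ENNReal).toReal := by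
    rw [lp.norm_rpow_eq_tsum h2, lp.norm_rpow_eq_tsum h2]
    have h4 : ∀ a : Idx, ‖(msPre σ m hm v) a‖ ^ (2:ENNReal).toReal
        = ‖v (σ a)‖ ^ (2:ENNReal).toReal := by
      intro a
      show ‖m a * v (σ a)‖ ^ _ = _
      rw [norm_mul, hm a, one_mul]
    rw [tsum_congr h4]
    exact σ.tsum_eq (f := fun b : Idx => ‖v b‖ ^ (2:ENNReal).toReal)
  exact Real.rpow_left_injOn (ne_of_gt h2) (Set.mem_setOf.2 (lp.norm_nonneg' _))
    (Set.mem_setOf.2 (lp.norm_nonneg' _)) key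

def mulShift (σ : Idx ≃ Idx) (m : Idx → ℂ) (hm : ∀ a, ‖m a‖ = 1) : UqH →L[ℂ] UqH :=
  LinearMap.mkContinuous (msPre σ m hm) 1 (fun v => by rw [msPre_norm, one_mul])

lemma mulShift_sing (σ : Idx ≃ Idx) (m : Idx → ℂ) (hm : ∀ a, ‖m a‖ = 1) (b : Idx) :
    mulShift σ m hm (sing b) = m (σ.symm b) • sing (σ.symm b) := by
  apply lp.ext
  funext a
  show m a * (sing b : ∀ _ : Idx, ℂ) (σ a) = (m (σ.symm b) • sing (σ.symm b) : UqH) a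
  have hr : ((m (σ.symm b) • sing (σ.symm b) : UqH) : ∀ _ : Idx, ℂ) a
      = m (σ.symm b) * (sing (σ.symm b) : ∀ _ : Idx, ℂ) a := rfl
  rw [hr]
  by_cases h : a = σ.symm b
  · subst h
    simp [sing, lp.single_apply]
  · have h2 : σ a ≠ b := fun hc => h (by simp [← hc])
    simp [sing, lp.single_apply, h, h2]

def σK : Idx ≃ Idx where
  toFun a := (a.1, a.2.1, a.2.2 - 1)
  invFun a := (a.1, a.2.1, a.2.2 + 1)
  left_inv a := by simp
  right_inv a := by simp

def σW : Idx ≃ Idx where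
  toFun a := (a.1, a.2.1 - 1, a.2.2)
  invFun a := (a.1, a.2.1 + 1, a.2.2)
  left_inv a := by simp
  right_inv a := by simp

/- ### Commutant star-subalgebras -/

def commutantStar (S : Set (UqH →L[ℂ] UqH)) : StarSubalgebra ℂ (UqH →L[ℂ] UqH) where
  carrier := {T | ∀ s ∈ S, T * s = s * T ∧ T * star s = star s * T}
  mul_mem' := by
    intro x y hx hy s hs
    constructor
    · rw [mul_assoc, (hy s hs).1, ← mul_assoc, (hx s hs).1, mul_assoc]
    · rw [mul_assoc, (hy s hs).2, ← mul_assoc, (hx s hs).2, mul_assoc]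
  one_mem' := by
    intro s hs
    simp
  add_mem' := by
    intro x y hx hy s hs
    constructor
    · rw [add_mul, mul_add, (hx s hs).1, (hy s hs).1]
    · rw [add_mul, mul_add, (hx s hs).2, (hy s hs).2]
  algebraMap_mem' := by
    intro r s hs
    exact ⟨Algebra.commutes r s, Algebra.commutes r (star s)⟩
  star_mem' := by
    intro x hx s hs
    constructor
    · have h2 := congrArg star (hx s hs).2
      simp only [star_mul, star_star] at h2
      exact h2.symm
    · have h1 := congrArg star (hx s hs).1
      simp only [star_mul] at h1
      exact h1.symm

lemma mem_commutantStar {T : UqH →L[ℂ] UqH} {S : Set (UqH →L[ℂ] UqH)} :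
    T ∈ commutantStar S ↔ ∀ s ∈ S, T * s = s * T ∧ T * star s = star s * T := Iff.rfl

lemma commutantStar_isClosed (S : Set (UqH →L[ℂ] UqH)) :
    IsClosed ((commutantStar S : Set (UqH →L[ℂ] UqH))) := by
  have h : (commutantStar S : Set (UqH →L[ℂ] UqH))
      = ⋂ s ∈ S, ({T | T * s = s * T} ∩ {T | T * star s = star s * T}) := by
    ext T
    simp only [Set.mem_iInter, Set.mem_inter_iff, Set.mem_setOf_eq]
    exact Iff.rfl
  rw [h]
  refine isClosed_biInter fun s hs => IsClosed.inter ?_ ?_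
  · exact isClosed_eq (continuous_mul_right s) (continuous_mul_left s)
  · exact isClosed_eq (continuous_mul_right (star s)) (continuous_mul_left (star s))

lemma pow_inj01 {r : ℝ} (h0 : 0 < r) (h1 : r < 1) {m n : ℕ} (h : r ^ m = r ^ n) : m = n := by
  rcases lt_trichotomy m n with hlt | heq | hgt
  · have := pow_lt_pow_right_of_lt_one₀ h0 h1 hlt
    linarith
  · exact heq
  · have := pow_lt_pow_right_of_lt_one₀ h0 h1 hgt
    linarith

set_option maxHeartbeats 4000000 in
set_option synthInstance.maxHeartbeats 200000 in
theorem Cstar_algebras_nonisomorphic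
    (q : ℂ) (hq0 : 0 < ‖q‖) (hq1 : ‖q‖ < 1) (hqnr : q.im ≠ 0)
    (θ : ℝ) (hθ : θ = Complex.arg q / Real.pi) (hirr : Irrational θ)
    (q' : ℝ) (hq'0 : 0 < |q'|) (hq'1 : |q'| < 1)
    (θ' : ℝ) (hθ' : θ' = Complex.arg (q' : ℂ) / Real.pi)
    (A B D : UqH →L[ℂ] UqH)
    (hA : ∀ (i : ℕ) (j k : ℤ),
      A (e i j k) = ((Real.sqrt (1 - ‖q‖ ^ (2 * (i + 1))) : ℝ) : ℂ) • e (i + 1) j k)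
    (hB : ∀ (i : ℕ) (j k : ℤ), B (e i j k) = (q ^ i) • e i (j + 1) k)
    (hD : ∀ (i : ℕ) (j k : ℤ),
      D (e i j k) = Complex.exp (-(2 * (Real.pi : ℂ) * (θ : ℂ) * (j : ℂ)) * Complex.I) • e i j (k + 1))
    (A' B' D' : UqH →L[ℂ] UqH)
    (hA' : ∀ (i : ℕ) (j k : ℤ),
      A' (e i j k) = ((Real.sqrt (1 - |q'| ^ (2 * (i + 1))) : ℝ) : ℂ) • e (i + 1) j k)
    (hB' : ∀ (i : ℕ) (j k : ℤ), B' (e i j k) = ((q' : ℂ) ^ i) • e i (j + 1) k)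
    (hD' : ∀ (i : ℕ) (j k : ℤ),
      D' (e i j k) = Complex.exp (-(2 * (Real.pi : ℂ) * (θ' : ℂ) * (j : ℂ)) * Complex.I) • e i j (k + 1))
    (𝒜q 𝒜q' : StarSubalgebra ℂ (UqH →L[ℂ] UqH))
    (h𝒜q : 𝒜q = (StarAlgebra.adjoin ℂ ({A, B, D} : Set (UqH →L[ℂ] UqH))).topologicalClosure)
    (h𝒜q' : 𝒜q' = (StarAlgebra.adjoin ℂ ({A', B', D'} : Set (UqH →L[ℂ] UqH))).topologicalClosure) :
    IsEmpty (𝒜q ≃⋆ₐ[ℂ] 𝒜q') := by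
  constructor
  intro Φ
  -- basic numeric facts
  have hqne : q ≠ 0 := by
    intro h; rw [h] at hq0; simp at hq0
  have hq'ne : q' ≠ 0 := by
    intro h; rw [h] at hq'0; simp at hq'0
  have habs0 : (0:ℝ) < ‖q‖ := hq0
  have hrpow_lt : ∀ i : ℕ, ‖q‖ ^ (2 * (i + 1)) < 1 := fun i =>
    pow_lt_one₀ (norm_nonneg q) hq1 (by omega)
  have hrpow_pos : ∀ i : ℕ, (0:ℝ) < ‖q‖ ^ (2 * (i + 1)) := fun i =>
    pow_pos habs0 _
  -- the weight function
  set w : ℕ → ℂ := fun i => ((Real.sqrt (1 - ‖q‖ ^ (2 * (i + 1))) : ℝ) : ℂ) with hw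
  have hwne : ∀ i : ℕ, w i ≠ 0 := by
    intro i
    rw [hw]
    simp only [ne_eq, Complex.ofReal_eq_zero]
    have : (0:ℝ) < Real.sqrt (1 - ‖q‖ ^ (2 * (i + 1))) :=
      Real.sqrt_pos.2 (by linarith [hrpow_lt i])
    linarith
  have hwsq : ∀ i : ℕ, w i * w i = ((1 - ‖q‖ ^ (2 * (i + 1)) : ℝ) : ℂ) := by
    intro i
    rw [hw, ← Complex.ofReal_mul, Real.mul_self_sqrt (by linarith [hrpow_lt i])]
  -- basis formulas
  have hAe : ∀ a : Idx, A (sing a) = w a.1 • sing (a.1 + 1, a.2.1, a.2.2) :=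
    fun a => hA a.1 a.2.1 a.2.2
  have hBe : ∀ a : Idx, B (sing a) = (q ^ a.1) • sing (a.1, a.2.1 + 1, a.2.2) :=
    fun a => hB a.1 a.2.1 a.2.2
  have hDe : ∀ a : Idx, D (sing a) = Ph θ a.2.1 • sing (a.1, a.2.1, a.2.2 + 1) :=
    fun a => hD a.1 a.2.1 a.2.2
  -- the auxiliary shift operators
  set Kt : UqH →L[ℂ] UqH := mulShift σK (fun _ => 1) (fun _ => by norm_num) with hKt
  set mW : Idx → ℂ := fun a => Ph θ a.2.2 with hmWdef
  have hmW : ∀ a, ‖mW a‖ = 1 := fun a => Ph_norm θ a.2.2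
  set Wt : UqH →L[ℂ] UqH := mulShift σW mW hmW with hWt
  have hKte : ∀ a : Idx, Kt (sing a) = (1:ℂ) • sing (a.1, a.2.1, a.2.2 + 1) :=
    fun a => mulShift_sing σK (fun _ => 1) (fun _ => by norm_num) a
  have hWte : ∀ a : Idx, Wt (sing a) = Ph θ a.2.2 • sing (a.1, a.2.1 + 1, a.2.2) :=
    fun a => mulShift_sing σW mW hmW a
  -- adjoint formulas
  have hτK_inj : Function.Injective (fun b : Idx => (b.1, b.2.1, b.2.2 + 1)) := by
    intro x y hxy
    simp only [Prod.mk.injEq] at hxy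
    obtain ⟨h1, h2, h3⟩ := hxy
    exact Prod.ext h1 (Prod.ext h2 (by omega))
  have hτW_inj : Function.Injective (fun b : Idx => (b.1, b.2.1 + 1, b.2.2)) := by
    intro x y hxy
    simp only [Prod.mk.injEq] at hxy
    obtain ⟨h1, h2, h3⟩ := hxy
    exact Prod.ext h1 (Prod.ext (by omega) h3)
  have hτA_inj : Function.Injective (fun b : Idx => (b.1 + 1, b.2.1, b.2.2)) := by
    intro x y hxy
    simp only [Prod.mk.injEq] at hxy
    obtain ⟨h1, h2, h3⟩ := hxy
    exact Prod.ext (by omega) (Prod.ext h2 h3)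
  have hKse : ∀ a : Idx,
      ContinuousLinearMap.adjoint Kt (sing a) = (1:ℂ) • sing (a.1, a.2.1, a.2.2 - 1) := by
    intro a
    have h := adj_on_basis Kt _ hτK_inj (fun _ => (1:ℂ)) hKte (a.1, a.2.1, a.2.2 - 1)
    have ha : ((a.1, a.2.1, a.2.2 - 1).1, (a.1, a.2.1, a.2.2 - 1).2.1,
        (a.1, a.2.1, a.2.2 - 1).2.2 + 1) = a := by
      obtain ⟨i, j, k⟩ := a
      show (i, j, k - 1 + 1) = (i, j, k)
      rw [show k - 1 + 1 = k from by omega]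
    rw [ha] at h
    simpa using h
  have hWse : ∀ a : Idx,
      ContinuousLinearMap.adjoint Wt (sing a) = Ph θ (-a.2.2) • sing (a.1, a.2.1 - 1, a.2.2) := by
    intro a
    have h := adj_on_basis Wt _ hτW_inj (fun b => Ph θ b.2.2) hWte (a.1, a.2.1 - 1, a.2.2)
    have ha : ((a.1, a.2.1 - 1, a.2.2).1, (a.1, a.2.1 - 1, a.2.2).2.1 + 1,
        (a.1, a.2.1 - 1, a.2.2).2.2) = a := by
      obtain ⟨i, j, k⟩ := a
      show (i, j - 1 + 1, k) = (i, j, k)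
      rw [show j - 1 + 1 = j from by omega]
    rw [ha] at h
    rw [h, conj_Ph]
  have hDse : ∀ a : Idx,
      ContinuousLinearMap.adjoint D (sing a) = Ph θ (-a.2.1) • sing (a.1, a.2.1, a.2.2 - 1) := by
    intro a
    have h := adj_on_basis D _ hτK_inj (fun b => Ph θ b.2.1) hDe (a.1, a.2.1, a.2.2 - 1)
    have ha : ((a.1, a.2.1, a.2.2 - 1).1, (a.1, a.2.1, a.2.2 - 1).2.1,
        (a.1, a.2.1, a.2.2 - 1).2.2 + 1) = a := by
      obtain ⟨i, j, k⟩ := a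
      show (i, j, k - 1 + 1) = (i, j, k)
      rw [show k - 1 + 1 = k from by omega]
    rw [ha] at h
    rw [h, conj_Ph]
  have hBse : ∀ a : Idx,
      ContinuousLinearMap.adjoint B (sing a)
        = (starRingEnd ℂ) (q ^ a.1) • sing (a.1, a.2.1 - 1, a.2.2) := by
    intro a
    have h := adj_on_basis B _ hτW_inj (fun b => q ^ b.1) hBe (a.1, a.2.1 - 1, a.2.2)
    have ha : ((a.1, a.2.1 - 1, a.2.2).1, (a.1, a.2.1 - 1, a.2.2).2.1 + 1,
        (a.1, a.2.1 - 1, a.2.2).2.2) = a := by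
      obtain ⟨i, j, k⟩ := a
      show (i, j - 1 + 1, k) = (i, j, k)
      rw [show j - 1 + 1 = j from by omega]
    rw [ha] at h
    exact h
  have hAse : ∀ (i : ℕ) (j k : ℤ),
      ContinuousLinearMap.adjoint A (sing (i + 1, j, k)) = w i • sing (i, j, k) := by
    intro i j k
    have h := adj_on_basis A _ hτA_inj (fun b => w b.1) hAe (i, j, k)
    rw [h]
    congr 1
    rw [hw]
    exact Complex.conj_ofReal _
  -- memberships of generators
  have hAmem : A ∈ 𝒜q := by
    rw [h𝒜q]
    exact StarSubalgebra.le_topologicalClosure _ (StarAlgebra.subset_adjoin ℂ _ (by simp))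
  have hBmem : B ∈ 𝒜q := by
    rw [h𝒜q]
    exact StarSubalgebra.le_topologicalClosure _ (StarAlgebra.subset_adjoin ℂ _ (by simp))
  have hDmem : D ∈ 𝒜q := by
    rw [h𝒜q]
    exact StarSubalgebra.le_topologicalClosure _ (StarAlgebra.subset_adjoin ℂ _ (by simp))
  have hD'mem : D' ∈ 𝒜q' := by
    rw [h𝒜q']
    exact StarSubalgebra.le_topologicalClosure _ (StarAlgebra.subset_adjoin ℂ _ (by simp))
  -- 𝒜q lands in the commutant of Kt and Wt
  have hAKt : A * Kt = Kt * A := by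
    refine comm_of_basis hAe hKte (fun a => rfl) (fun a => by ring)
  have hAKs : A * ContinuousLinearMap.adjoint Kt = ContinuousLinearMap.adjoint Kt * A := by
    refine comm_of_basis hAe hKse (fun a => rfl) (fun a => by ring)
  have hAWt : A * Wt = Wt * A := by
    refine comm_of_basis hAe hWte (fun a => rfl) (fun a => by ring)
  have hAWs : A * ContinuousLinearMap.adjoint Wt = ContinuousLinearMap.adjoint Wt * A := by
    refine comm_of_basis hAe hWse (fun a => rfl) (fun a => by ring)
  have hBKt : B * Kt = Kt * B := by
    refine comm_of_basis hBe hKte (fun a => rfl) (fun a => by ring)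
  have hBKs : B * ContinuousLinearMap.adjoint Kt = ContinuousLinearMap.adjoint Kt * B := by
    refine comm_of_basis hBe hKse (fun a => rfl) (fun a => by ring)
  have hBWt : B * Wt = Wt * B := by
    refine comm_of_basis hBe hWte (fun a => rfl) (fun a => by ring)
  have hBWs : B * ContinuousLinearMap.adjoint Wt = ContinuousLinearMap.adjoint Wt * B := by
    refine comm_of_basis hBe hWse ?_ (fun a => by ring)
    intro a
    obtain ⟨i, j, k⟩ := a
    show ((i : ℕ), j - 1 + 1, k) = ((i : ℕ), j + 1 - 1, k)
    rw [show j - 1 + 1 = j + 1 - 1 from by omega]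
  have hDKt : D * Kt = Kt * D := by
    refine comm_of_basis hDe hKte (fun a => rfl) (fun a => by ring)
  have hDKs : D * ContinuousLinearMap.adjoint Kt = ContinuousLinearMap.adjoint Kt * D := by
    refine comm_of_basis hDe hKse ?_ (fun a => by ring)
    intro a
    obtain ⟨i, j, k⟩ := a
    show ((i : ℕ), j, k - 1 + 1) = ((i : ℕ), j, k + 1 - 1)
    rw [show k - 1 + 1 = k + 1 - 1 from by omega]
  have hDWt : D * Wt = Wt * D := by
    refine comm_of_basis hDe hWte (fun a => rfl) ?_
    intro a
    obtain ⟨i, j, k⟩ := a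
    show Ph θ k * Ph θ (j + 1) = Ph θ j * Ph θ (k + 1)
    rw [← Ph_add, ← Ph_add]
    congr 1
    omega
  have hDWs : D * ContinuousLinearMap.adjoint Wt = ContinuousLinearMap.adjoint Wt * D := by
    refine comm_of_basis hDe hWse (fun a => rfl) ?_
    intro a
    obtain ⟨i, j, k⟩ := a
    show Ph θ (-k) * Ph θ (j - 1) = Ph θ j * Ph θ (-(k + 1))
    rw [← Ph_add, ← Ph_add]
    congr 1
    omega
  
  -- 𝒜q is contained in the star-commutant of {Kt, Wt}
  have h𝒜qC : 𝒜q ≤ commutantStar {Kt, Wt} := by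
    rw [h𝒜q]
    refine StarSubalgebra.topologicalClosure_minimal (StarAlgebra.adjoin_le ?_)
      (commutantStar_isClosed _)
    intro x hx
    simp only [Set.mem_insert_iff, Set.mem_singleton_iff] at hx
    rw [SetLike.mem_coe, mem_commutantStar]
    intro s hs
    simp only [Set.mem_insert_iff, Set.mem_singleton_iff] at hs
    rcases hx with rfl | rfl | rfl <;> rcases hs with rfl | rfl
    · exact ⟨hAKt, by rw [ContinuousLinearMap.star_eq_adjoint]; exact hAKs⟩
    · exact ⟨hAWt, by rw [ContinuousLinearMap.star_eq_adjoint]; exact hAWs⟩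
    · exact ⟨hBKt, by rw [ContinuousLinearMap.star_eq_adjoint]; exact hBKs⟩
    · exact ⟨hBWt, by rw [ContinuousLinearMap.star_eq_adjoint]; exact hBWs⟩
    · exact ⟨hDKt, by rw [ContinuousLinearMap.star_eq_adjoint]; exact hDKs⟩
    · exact ⟨hDWt, by rw [ContinuousLinearMap.star_eq_adjoint]; exact hDWs⟩
  -- θ' is an integer, so D' is the plain shift in k
  obtain ⟨mθ, hmθ⟩ : ∃ m : ℤ, θ' = (m : ℝ) := by
    rcases lt_or_gt_of_ne hq'ne with hlt | hgt
    · refine ⟨1, ?_⟩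
      rw [hθ', Complex.arg_ofReal_of_neg hlt]
      rw [div_self Real.pi_ne_zero]
      norm_num
    · refine ⟨0, ?_⟩
      rw [hθ', Complex.arg_ofReal_of_nonneg hgt.le]
      norm_num
  have hΨ' : ∀ j : ℤ,
      Complex.exp (-(2 * (Real.pi:ℂ) * (θ':ℂ) * (j:ℂ)) * Complex.I) = 1 := by
    intro j
    have hx : (-(2 * (Real.pi:ℂ) * (θ':ℂ) * (j:ℂ)) * Complex.I)
        = ((-(mθ * j) : ℤ):ℂ) * (2 * (Real.pi:ℂ) * Complex.I) := by
      rw [hmθ]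
      push_cast
      ring
    rw [hx, Complex.exp_int_mul_two_pi_mul_I]
  have hD'e : ∀ a : Idx, D' (sing a) = (1:ℂ) • sing (a.1, a.2.1, a.2.2 + 1) := by
    intro a
    have := hD' a.1 a.2.1 a.2.2
    rwa [hΨ'] at this
  have hD'se : ∀ a : Idx,
      ContinuousLinearMap.adjoint D' (sing a) = (1:ℂ) • sing (a.1, a.2.1, a.2.2 - 1) := by
    intro a
    have h := adj_on_basis D' _ hτK_inj (fun _ => (1:ℂ)) hD'e (a.1, a.2.1, a.2.2 - 1)
    have ha : ((a.1, a.2.1, a.2.2 - 1).1, (a.1, a.2.1, a.2.2 - 1).2.1,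
        (a.1, a.2.1, a.2.2 - 1).2.2 + 1) = a := by
      obtain ⟨i, j, k⟩ := a
      show (i, j, k - 1 + 1) = (i, j, k)
      rw [show k - 1 + 1 = k from by omega]
    rw [ha] at h
    simpa using h
  -- D' is central in 𝒜q'
  have hA'e : ∀ a : Idx, A' (sing a)
      = ((Real.sqrt (1 - |q'| ^ (2 * (a.1 + 1))) : ℝ) : ℂ) • sing (a.1 + 1, a.2.1, a.2.2) :=
    fun a => hA' a.1 a.2.1 a.2.2
  have hB'e : ∀ a : Idx, B' (sing a) = ((q' : ℂ) ^ a.1) • sing (a.1, a.2.1 + 1, a.2.2) :=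
    fun a => hB' a.1 a.2.1 a.2.2
  have h𝒜q'C : 𝒜q' ≤ commutantStar {D'} := by
    rw [h𝒜q']
    refine StarSubalgebra.topologicalClosure_minimal (StarAlgebra.adjoin_le ?_)
      (commutantStar_isClosed _)
    intro x hx
    simp only [Set.mem_insert_iff, Set.mem_singleton_iff] at hx
    rw [SetLike.mem_coe, mem_commutantStar]
    intro s hs
    simp only [Set.mem_singleton_iff] at hs
    subst hs
    rcases hx with rfl | rfl | rfl
    · constructor
      · exact comm_of_basis hA'e hD'e (fun a => rfl) (fun a => by ring)
      · rw [ContinuousLinearMap.star_eq_adjoint]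
        exact comm_of_basis hA'e hD'se (fun a => rfl) (fun a => by ring)
    · constructor
      · exact comm_of_basis hB'e hD'e (fun a => rfl) (fun a => by ring)
      · rw [ContinuousLinearMap.star_eq_adjoint]
        exact comm_of_basis hB'e hD'se (fun a => rfl) (fun a => by ring)
    · constructor
      · exact comm_of_basis hD'e hD'e (fun a => rfl) (fun a => by ring)
      · rw [ContinuousLinearMap.star_eq_adjoint]
        refine comm_of_basis hD'e hD'se ?_ (fun a => by ring)
        intro a
        obtain ⟨i, j, k⟩ := a
        show ((i : ℕ), j, k - 1 + 1) = ((i : ℕ), j, k + 1 - 1)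
        rw [show k - 1 + 1 = k + 1 - 1 from by omega]
  have hcentral : ∀ T ∈ 𝒜q', T * D' = D' * T := by
    intro T hT
    exact ((mem_commutantStar.mp (h𝒜q'C hT)) D' (Set.mem_singleton _)).1
  
  -- transport D' through Φ to a central element u of 𝒜q
  set uE : 𝒜q := Φ.symm ⟨D', hD'mem⟩ with huE
  set u : UqH →L[ℂ] UqH := (uE : UqH →L[ℂ] UqH) with hu_def
  have humem : u ∈ 𝒜q := uE.2
  have hu : ∀ a ∈ 𝒜q, u * a = a * u := by
    intro a ha
    have h1 : (⟨D', hD'mem⟩ : 𝒜q') * Φ ⟨a, ha⟩ = Φ ⟨a, ha⟩ * (⟨D', hD'mem⟩ : 𝒜q') := by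
      apply Subtype.ext
      show D' * ((Φ ⟨a, ha⟩ : 𝒜q') : UqH →L[ℂ] UqH)
          = ((Φ ⟨a, ha⟩ : 𝒜q') : UqH →L[ℂ] UqH) * D'
      exact (hcentral _ (Φ ⟨a, ha⟩).2).symm
    have h2 : uE * ⟨a, ha⟩ = ⟨a, ha⟩ * uE := by
      have h3 := Φ.apply_symm_apply (⟨D', hD'mem⟩ : 𝒜q')
      have hmul : ∀ x y : 𝒜q, Φ (x * y) = Φ x * Φ y := fun x y => map_mul Φ x y
      have h4 : Φ (uE * ⟨a, ha⟩) = Φ (⟨a, ha⟩ * uE) := by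
        rw [hmul, hmul, huE, h3, h1]
      exact Φ.injective h4
    exact congrArg Subtype.val h2
  have huC := h𝒜qC humem
  have huKs : u * ContinuousLinearMap.adjoint Kt = ContinuousLinearMap.adjoint Kt * u := by
    have := (mem_commutantStar.mp huC Kt (by simp)).2
    rwa [ContinuousLinearMap.star_eq_adjoint] at this
  have huWs : u * ContinuousLinearMap.adjoint Wt = ContinuousLinearMap.adjoint Wt * u := by
    have := (mem_commutantStar.mp huC Wt (by simp)).2
    rwa [ContinuousLinearMap.star_eq_adjoint] at this
  -- R1 : entries vanish unless the ℕ-indices agree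
  have hR1 : ∀ a b : Idx, a.1 ≠ b.1 → ⟪sing a, u (sing b)⟫_ℂ = 0 := by
    intro a b hne
    have hNmem : (star A * A) ∈ 𝒜q := mul_mem (star_mem hAmem) hAmem
    have hcommN : u * (star A * A) = (star A * A) * u := hu _ hNmem
    have hNe : ∀ c : Idx, (star A * A) (sing c)
        = ((1 - ‖q‖ ^ (2 * (c.1 + 1)) : ℝ) : ℂ) • sing c := by
      intro c
      rw [ContinuousLinearMap.mul_apply, hAe, map_smul, ContinuousLinearMap.star_eq_adjoint,
        hAse c.1 c.2.1 c.2.2, smul_smul, hwsq]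
    have e3 : u ((star A * A) (sing b)) = (star A * A) (u (sing b)) := comm_apply hcommN _
    have e1 : ⟪sing a, u ((star A * A) (sing b))⟫_ℂ
        = ((1 - ‖q‖ ^ (2 * (b.1 + 1)) : ℝ) : ℂ) * ⟪sing a, u (sing b)⟫_ℂ := by
      rw [hNe b, map_smul, inner_smul_right]
    have hsa : ContinuousLinearMap.adjoint (star A * A) = star A * A := by
      rw [← ContinuousLinearMap.star_eq_adjoint, star_mul, star_star]
    have e2 : ⟪sing a, (star A * A) (u (sing b))⟫_ℂ
        = ((1 - ‖q‖ ^ (2 * (a.1 + 1)) : ℝ) : ℂ) * ⟪sing a, u (sing b)⟫_ℂ := by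
      calc ⟪sing a, (star A * A) (u (sing b))⟫_ℂ
          = ⟪ContinuousLinearMap.adjoint (star A * A) (sing a), u (sing b)⟫_ℂ :=
            (ContinuousLinearMap.adjoint_inner_left _ _ _).symm
        _ = ⟪(star A * A) (sing a), u (sing b)⟫_ℂ := by rw [hsa]
        _ = _ := by rw [hNe a, inner_smul_left, Complex.conj_ofReal]
    have key : ((1 - ‖q‖ ^ (2 * (b.1 + 1)) : ℝ) : ℂ) * ⟪sing a, u (sing b)⟫_ℂ
        = ((1 - ‖q‖ ^ (2 * (a.1 + 1)) : ℝ) : ℂ) * ⟪sing a, u (sing b)⟫_ℂ := by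
      rw [← e1, ← e2, e3]
    have hccne : ((1 - ‖q‖ ^ (2 * (b.1 + 1)) : ℝ) : ℂ)
        ≠ ((1 - ‖q‖ ^ (2 * (a.1 + 1)) : ℝ) : ℂ) := by
      intro hcc
      rw [Complex.ofReal_inj] at hcc
      have : ‖q‖ ^ (2 * (b.1 + 1)) = ‖q‖ ^ (2 * (a.1 + 1)) := by linarith
      have := pow_inj01 habs0 hq1 this
      omega
    have hz : (((1 - ‖q‖ ^ (2 * (b.1 + 1)) : ℝ) : ℂ)
        - ((1 - ‖q‖ ^ (2 * (a.1 + 1)) : ℝ) : ℂ)) * ⟪sing a, u (sing b)⟫_ℂ = 0 := by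
      rw [sub_mul, key, sub_self]
    rcases mul_eq_zero.mp hz with h | h
    · exact absurd (sub_eq_zero.mp h) hccne
    · exact h
  
  -- R2 : entries vanish unless the first ℤ-indices agree
  have hR2 : ∀ a b : Idx, a.2.1 ≠ b.2.1 → ⟪sing a, u (sing b)⟫_ℂ = 0 := by
    intro a b hne
    obtain ⟨i', j', k'⟩ := a
    obtain ⟨i, j, k⟩ := b
    have hne' : j' ≠ j := hne
    have huD : u * D = D * u := hu D hDmem
    have c1 : D (ContinuousLinearMap.adjoint Kt (sing (i, j, k))) = Ph θ j • sing (i, j, k) := by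
      rw [hKse, one_smul, hDe]
      show Ph θ j • sing (i, j, k - 1 + 1) = _
      rw [show k - 1 + 1 = k from by omega]
    have e1 : ⟪sing (i', j', k'), u (D (ContinuousLinearMap.adjoint Kt (sing (i, j, k))))⟫_ℂ
        = Ph θ j * ⟪sing (i', j', k'), u (sing (i, j, k))⟫_ℂ := by
      rw [c1, map_smul, inner_smul_right]
    have e2 : u (D (ContinuousLinearMap.adjoint Kt (sing (i, j, k))))
        = D (ContinuousLinearMap.adjoint Kt (u (sing (i, j, k)))) := by
      rw [comm_apply huD, comm_apply huKs]
    have e3 : ⟪sing (i', j', k'), D (ContinuousLinearMap.adjoint Kt (u (sing (i, j, k))))⟫_ℂ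
        = Ph θ j' * ⟪sing (i', j', k'), u (sing (i, j, k))⟫_ℂ := by
      calc ⟪sing (i', j', k'), D (ContinuousLinearMap.adjoint Kt (u (sing (i, j, k))))⟫_ℂ
          = ⟪ContinuousLinearMap.adjoint D (sing (i', j', k')),
              ContinuousLinearMap.adjoint Kt (u (sing (i, j, k)))⟫_ℂ :=
            (ContinuousLinearMap.adjoint_inner_left _ _ _).symm
        _ = Ph θ j' * ⟪sing (i', j', k' - 1),
              ContinuousLinearMap.adjoint Kt (u (sing (i, j, k)))⟫_ℂ := by
            rw [hDse, inner_smul_left, conj_Ph, neg_neg]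
        _ = Ph θ j' * ⟪Kt (sing (i', j', k' - 1)), u (sing (i, j, k))⟫_ℂ := by
            rw [ContinuousLinearMap.adjoint_inner_right]
        _ = Ph θ j' * ⟪sing (i', j', k'), u (sing (i, j, k))⟫_ℂ := by
            rw [hKte, one_smul]
            show _ * ⟪sing (i', j', k' - 1 + 1), _⟫_ℂ = _
            rw [show k' - 1 + 1 = k' from by omega]
    have key : Ph θ j * ⟪sing (i', j', k'), u (sing (i, j, k))⟫_ℂ
        = Ph θ j' * ⟪sing (i', j', k'), u (sing (i, j, k))⟫_ℂ := by
      rw [← e1, e2, e3]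
    by_contra hX
    exact hne' (Ph_inj hirr (mul_right_cancel₀ hX key)).symm
  -- R3 : entries with equal ℕ- and first ℤ-indices vanish unless the last indices agree
  have hR3 : ∀ (i : ℕ) (j k j' k' : ℤ), k' ≠ k →
      ⟪sing (i, j', k'), u (sing (i, j, k))⟫_ℂ = 0 := by
    intro i j k j' k' hne
    have huB : u * B = B * u := hu B hBmem
    have c1 : B (ContinuousLinearMap.adjoint Wt (sing (i, j, k)))
        = (Ph θ (-k) * q ^ i) • sing (i, j, k) := by
      rw [hWse, map_smul, hBe, smul_smul]
      show (Ph θ (-k) * q ^ i) • sing (i, j - 1 + 1, k) = _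
      rw [show j - 1 + 1 = j from by omega]
    have e1 : ⟪sing (i, j', k'), u (B (ContinuousLinearMap.adjoint Wt (sing (i, j, k))))⟫_ℂ
        = (Ph θ (-k) * q ^ i) * ⟪sing (i, j', k'), u (sing (i, j, k))⟫_ℂ := by
      rw [c1, map_smul, inner_smul_right]
    have e2 : u (B (ContinuousLinearMap.adjoint Wt (sing (i, j, k))))
        = B (ContinuousLinearMap.adjoint Wt (u (sing (i, j, k)))) := by
      rw [comm_apply huB, comm_apply huWs]
    have e3 : ⟪sing (i, j', k'), B (ContinuousLinearMap.adjoint Wt (u (sing (i, j, k))))⟫_ℂ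
        = (q ^ i * Ph θ (-k')) * ⟪sing (i, j', k'), u (sing (i, j, k))⟫_ℂ := by
      calc ⟪sing (i, j', k'), B (ContinuousLinearMap.adjoint Wt (u (sing (i, j, k))))⟫_ℂ
          = ⟪ContinuousLinearMap.adjoint B (sing (i, j', k')),
              ContinuousLinearMap.adjoint Wt (u (sing (i, j, k)))⟫_ℂ :=
            (ContinuousLinearMap.adjoint_inner_left _ _ _).symm
        _ = q ^ i * ⟪sing (i, j' - 1, k'),
              ContinuousLinearMap.adjoint Wt (u (sing (i, j, k)))⟫_ℂ := by
            rw [hBse, inner_smul_left, Complex.conj_conj]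
        _ = q ^ i * ⟪Wt (sing (i, j' - 1, k')), u (sing (i, j, k))⟫_ℂ := by
            rw [ContinuousLinearMap.adjoint_inner_right]
        _ = (q ^ i * Ph θ (-k')) * ⟪sing (i, j', k'), u (sing (i, j, k))⟫_ℂ := by
            rw [hWte, inner_smul_left, conj_Ph]
            show q ^ i * (Ph θ (-k') * ⟪sing (i, j' - 1 + 1, k'), _⟫_ℂ) = _
            rw [show j' - 1 + 1 = j' from by omega, mul_assoc]
    have key : (Ph θ (-k) * q ^ i) * ⟪sing (i, j', k'), u (sing (i, j, k))⟫_ℂ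
        = (q ^ i * Ph θ (-k')) * ⟪sing (i, j', k'), u (sing (i, j, k))⟫_ℂ := by
      rw [← e1, e2, e3]
    by_contra hX
    have hqiX : q ^ i * ⟪sing (i, j', k'), u (sing (i, j, k))⟫_ℂ ≠ 0 :=
      mul_ne_zero (pow_ne_zero _ hqne) hX
    have hph : Ph θ (-k) = Ph θ (-k') := by
      apply mul_right_cancel₀ hqiX
      calc Ph θ (-k) * (q ^ i * ⟪sing (i, j', k'), u (sing (i, j, k))⟫_ℂ)
          = (Ph θ (-k) * q ^ i) * ⟪sing (i, j', k'), u (sing (i, j, k))⟫_ℂ := by ring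
        _ = (q ^ i * Ph θ (-k')) * ⟪sing (i, j', k'), u (sing (i, j, k))⟫_ℂ := key
        _ = Ph θ (-k') * (q ^ i * ⟪sing (i, j', k'), u (sing (i, j, k))⟫_ℂ) := by ring
    have := Ph_inj hirr hph
    omega
  -- all off-diagonal entries vanish
  have hvan : ∀ a b : Idx, a ≠ b → ⟪sing a, u (sing b)⟫_ℂ = 0 := by
    intro a b hne
    obtain ⟨i', j', k'⟩ := a
    obtain ⟨i, j, k⟩ := b
    by_cases h1 : i' = i
    · subst h1
      by_cases h2 : j' = j
      · subst h2
        have h3 : k' ≠ k := by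
          intro h3
          exact hne (by rw [h3])
        exact hR3 i' j' k j' k' h3
      · exact hR2 (i', j', k') (i', j, k) h2
    · exact hR1 (i', j', k') (i, j, k) h1
  -- hence u is diagonal
  set dg : Idx → ℂ := fun b => ⟪sing b, u (sing b)⟫_ℂ with hdgdef
  have hdiag : ∀ b : Idx, u (sing b) = dg b • sing b := by
    intro b
    apply vec_ext
    intro a
    rw [inner_smul_right, inner_sing_sing]
    by_cases h : a = b
    · subst h
      rw [if_pos rfl, mul_one, hdgdef]
    · rw [if_neg h, mul_zero]
      exact hvan a b h
  
  -- clean basis formulas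
  have hAi : ∀ (i : ℕ) (j k : ℤ), A (sing (i, j, k)) = w i • sing (i + 1, j, k) :=
    fun i j k => hAe (i, j, k)
  have hBi : ∀ (i : ℕ) (j k : ℤ), B (sing (i, j, k)) = (q ^ i) • sing (i, j + 1, k) :=
    fun i j k => hBe (i, j, k)
  have hDi : ∀ (i : ℕ) (j k : ℤ), D (sing (i, j, k)) = Ph θ j • sing (i, j, k + 1) :=
    fun i j k => hDe (i, j, k)
  -- diagonal recurrences
  have hrecA : ∀ (i : ℕ) (j k : ℤ), dg (i + 1, j, k) = dg (i, j, k) := by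
    intro i j k
    have hc := comm_apply (hu A hAmem) (sing (i, j, k))
    rw [hAi, map_smul, hdiag (i + 1, j, k), hdiag (i, j, k), map_smul, hAi,
      smul_smul, smul_smul] at hc
    have h6 := smul_sing_cancel hc
    have h7 : w i * dg (i + 1, j, k) = w i * dg (i, j, k) := by
      rw [h6]; ring
    exact mul_left_cancel₀ (hwne i) h7
  have hrecB : ∀ (i : ℕ) (j k : ℤ), dg (i, j + 1, k) = dg (i, j, k) := by
    intro i j k
    have hc := comm_apply (hu B hBmem) (sing (i, j, k))
    rw [hBi, map_smul, hdiag (i, j + 1, k), hdiag (i, j, k), map_smul, hBi,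
      smul_smul, smul_smul] at hc
    have h6 := smul_sing_cancel hc
    have h7 : q ^ i * dg (i, j + 1, k) = q ^ i * dg (i, j, k) := by
      rw [h6]; ring
    exact mul_left_cancel₀ (pow_ne_zero _ hqne) h7
  have hrecD : ∀ (i : ℕ) (j k : ℤ), dg (i, j, k + 1) = dg (i, j, k) := by
    intro i j k
    have hc := comm_apply (hu D hDmem) (sing (i, j, k))
    rw [hDi, map_smul, hdiag (i, j, k + 1), hdiag (i, j, k), map_smul, hDi,
      smul_smul, smul_smul] at hc
    have h6 := smul_sing_cancel hc
    have h7 : Ph θ j * dg (i, j, k + 1) = Ph θ j * dg (i, j, k) := by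
      rw [h6]; ring
    exact mul_left_cancel₀ (Ph_ne_zero θ j) h7
  -- the diagonal is constant
  have hconstk : ∀ (i : ℕ) (j k : ℤ), dg (i, j, k) = dg (i, j, 0) := by
    intro i j k
    induction k using Int.induction_on with
    | zero => rfl
    | succ n ih => rw [hrecD i j (n : ℤ)]; exact ih
    | pred n ih =>
        have h := hrecD i j (-(n : ℤ) - 1)
        rw [show (-(n : ℤ) - 1 + 1) = -(n : ℤ) from by omega] at h
        rw [← h]; exact ih
  have hconstj : ∀ (i : ℕ) (j : ℤ), dg (i, j, 0) = dg (i, 0, 0) := by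
    intro i j
    induction j using Int.induction_on with
    | zero => rfl
    | succ n ih => rw [hrecB i (n : ℤ) 0]; exact ih
    | pred n ih =>
        have h := hrecB i (-(n : ℤ) - 1) 0
        rw [show (-(n : ℤ) - 1 + 1) = -(n : ℤ) from by omega] at h
        rw [← h]; exact ih
  have hconsti : ∀ i : ℕ, dg (i, 0, 0) = dg (0, 0, 0) := by
    intro i
    induction i with
    | zero => rfl
    | succ n ih => rw [hrecA n 0 0]; exact ih
  -- u is a scalar
  have hscal : u = dg (0, 0, 0) • (1 : UqH →L[ℂ] UqH) := by
    apply op_ext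
    intro a
    obtain ⟨i, j, k⟩ := a
    rw [hdiag (i, j, k), hconstk i j k, hconstj i j, hconsti i,
      ContinuousLinearMap.smul_apply, ContinuousLinearMap.one_apply]
  -- transport back : D' must be the same scalar, contradiction
  have hEq : uE = dg (0, 0, 0) • (1 : 𝒜q) := by
    apply Subtype.ext
    show u = _
    rw [hscal]
    rfl
  have hPhiEq : (⟨D', hD'mem⟩ : 𝒜q') = dg (0, 0, 0) • (1 : 𝒜q') := by
    have h3 := Φ.apply_symm_apply (⟨D', hD'mem⟩ : 𝒜q')
    have hone : Φ (1 : 𝒜q) = 1 := map_one Φ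
    have hsmul : Φ (dg (0, 0, 0) • (1 : 𝒜q)) = dg (0, 0, 0) • Φ (1 : 𝒜q) :=
      map_smul Φ _ _
    rw [← h3, ← huE, hEq, hsmul, hone]
  have hop : D' = dg (0, 0, 0) • (1 : UqH →L[ℂ] UqH) := by
    have h5 := congrArg Subtype.val hPhiEq
    simpa using h5
  have hcontra := congrArg
    (fun T : UqH →L[ℂ] UqH => ⟪sing (0, 0, 1), T (sing (0, 0, 0))⟫_ℂ) hop
  have hL : ⟪sing (0, 0, 1), D' (sing (0, 0, 0))⟫_ℂ = 1 := by
    rw [hD'e (0, 0, 0), one_smul, inner_sing_sing]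
    norm_num
  have hRt : ⟪sing (0, 0, 1),
      (dg (0, 0, 0) • (1 : UqH →L[ℂ] UqH)) (sing (0, 0, 0))⟫_ℂ = 0 := by
    rw [ContinuousLinearMap.smul_apply, ContinuousLinearMap.one_apply, inner_smul_right,
      inner_sing_sing, if_neg (by simp), mul_zero]
  rw [hL, hRt] at hcontra
  exact one_ne_zero hcontra
end
end

section
/- Suppose q is real (so θ = (1/π)·arg(q) ∈ {0, 1} and D e_{i,j,k} = e_{i,j,k+1}). Then D commutes with every element of 𝒜; in particular, D is a non-scalar unitary lying in the center of 𝒜, so the center of 𝒜 (and of the star-subalgebra generated by A, B, D and the identity) is strictly larger than ℂ·1. -/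
open scoped InnerProductSpace
noncomputable section

lemma e_single (p : ℕ × ℤ × ℤ) : e p.1 p.2.1 p.2.2 = lp.single 2 p 1 := by
  simp [e]

lemma single_eq_smul_e (f : UqH) (p : ℕ × ℤ × ℤ) :
    lp.single 2 p (f p) = f p • e p.1 p.2.1 p.2.2 := by
  rw [e_single, ← lp.single_smul, smul_eq_mul, mul_one]

lemma inner_e_left (i : ℕ) (j k : ℤ) (f : UqH) : ⟪e i j k, f⟫_ℂ = f (i, j, k) := by
  rw [e, lp.inner_single_left]
  simp

/-- Two continuous linear maps agreeing on the basis vectors are equal. -/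
lemma clm_ext_e (T₁ T₂ : UqH →L[ℂ] UqH)
    (h : ∀ (i : ℕ) (j k : ℤ), T₁ (e i j k) = T₂ (e i j k)) : T₁ = T₂ := by
  apply ContinuousLinearMap.ext
  intro f
  have h1 : HasSum (fun p : ℕ × ℤ × ℤ => lp.single 2 p (f p)) f :=
    lp.hasSum_single (by norm_num) f
  have e1 : HasSum (fun p : ℕ × ℤ × ℤ => T₁ (lp.single 2 p (f p))) (T₁ f) := h1.mapL T₁
  have e2 : HasSum (fun p : ℕ × ℤ × ℤ => T₂ (lp.single 2 p (f p))) (T₂ f) := h1.mapL T₂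
  have key : (fun p : ℕ × ℤ × ℤ => T₁ (lp.single 2 p (f p)))
      = fun p : ℕ × ℤ × ℤ => T₂ (lp.single 2 p (f p)) := by
    funext p
    rw [single_eq_smul_e, map_smul, map_smul, h]
  exact e1.unique (key ▸ e2)

/-- Pointwise action of the shift operator `D`. -/
lemma shift_apply (D : UqH →L[ℂ] UqH)
    (hDe : ∀ (i : ℕ) (j k : ℤ), D (e i j k) = e i j (k + 1))
    (f : UqH) (i : ℕ) (j k : ℤ) : (D f) (i, j, k) = f (i, j, k - 1) := by
  have h1 : HasSum (fun p : ℕ × ℤ × ℤ => lp.single 2 p (f p)) f :=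
    lp.hasSum_single (by norm_num) f
  have e1 : HasSum (fun p : ℕ × ℤ × ℤ => D (lp.single 2 p (f p))) (D f) := h1.mapL D
  have e2 : HasSum (fun p : ℕ × ℤ × ℤ => ⟪e i j k, D (lp.single 2 p (f p))⟫_ℂ)
      ⟪e i j k, D f⟫_ℂ := e1.mapL (innerSL ℂ (e i j k))
  have key : (fun p : ℕ × ℤ × ℤ => ⟪e i j k, D (lp.single 2 p (f p))⟫_ℂ)
      = fun p : ℕ × ℤ × ℤ => if p = (i, j, k - 1) then f (i, j, k - 1) else 0 := by
    funext p
    obtain ⟨a, b, c⟩ := p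
    rw [single_eq_smul_e, map_smul, hDe, inner_smul_right, inner_e_left]
    by_cases hp : (a, b, c) = (i, j, k - 1)
    · obtain ⟨ha, hb, hc⟩ : a = i ∧ b = j ∧ c = k - 1 := by
        simpa [Prod.ext_iff] using hp
      subst ha; subst hb; subst hc
      have hk : k - 1 + 1 = k := by omega
      rw [hk, if_pos rfl, e, lp.single_apply_self, mul_one]
    · rw [if_neg hp]
      have hne : (i, j, k) ≠ ((a, b, c + 1) : ℕ × ℤ × ℤ) := by
        intro h
        apply hp
        have : i = a ∧ j = b ∧ k = c + 1 := by simpa [Prod.ext_iff] using h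
        simp [Prod.ext_iff]
        omega
      rw [e, lp.single_apply_ne _ _ _ hne, mul_zero]
  have e3 : HasSum (fun p : ℕ × ℤ × ℤ => if p = (i, j, k - 1) then f (i, j, k - 1) else 0)
      ⟪e i j k, D f⟫_ℂ := key ▸ e2
  have e4 : HasSum (fun p : ℕ × ℤ × ℤ => if p = (i, j, k - 1) then f (i, j, k - 1) else 0)
      (f (i, j, k - 1)) := hasSum_ite_eq _ _
  rw [← inner_e_left]
  exact e3.unique e4

/-- Pointwise action of the adjoint of the shift operator. -/
lemma adj_shift_apply (D : UqH →L[ℂ] UqH)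
    (hDe : ∀ (i : ℕ) (j k : ℤ), D (e i j k) = e i j (k + 1))
    (g : UqH) (i : ℕ) (j k : ℤ) :
    (ContinuousLinearMap.adjoint D g) (i, j, k) = g (i, j, k + 1) := by
  rw [← inner_e_left i j k, ContinuousLinearMap.adjoint_inner_right, hDe, inner_e_left]

set_option maxHeartbeats 1000000 in
set_option synthInstance.maxHeartbeats 200000 in
/-- if `q` is real, then `D` commutes with every element of `𝒜 = C(U_q(2))`;
in particular `D` is a non-scalar unitary in the center of `𝒜`, so the center of `𝒜`
(and of the star-subalgebra generated by `A`, `B`, `D` and the identity) is strictly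
larger than `ℂ·1`. -/
theorem D_central_nonscalar_of_real
    (q : ℂ) (hq0 : 0 < ‖q‖) (hq1 : ‖q‖ < 1) (hqre : q.im = 0)
    (θ : ℝ) (hθ : θ = Complex.arg q / Real.pi)
    (A B D : UqH →L[ℂ] UqH)
    (hA : ∀ (i : ℕ) (j k : ℤ),
      A (e i j k) = ((Real.sqrt (1 - ‖q‖ ^ (2 * (i + 1))) : ℝ) : ℂ) • e (i + 1) j k)
    (hB : ∀ (i : ℕ) (j k : ℤ), B (e i j k) = (q ^ i) • e i (j + 1) k)
    (hD : ∀ (i : ℕ) (j k : ℤ),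
      D (e i j k) = Complex.exp (-(2 * (Real.pi : ℂ) * (θ : ℂ) * (j : ℂ)) * Complex.I) • e i j (k + 1))
    (𝒜 : StarSubalgebra ℂ (UqH →L[ℂ] UqH))
    (h𝒜 : 𝒜 = (StarAlgebra.adjoin ℂ ({A, B, D} : Set (UqH →L[ℂ] UqH))).topologicalClosure) :
    D ∈ 𝒜 ∧ (∀ S ∈ 𝒜, D * S = S * D) ∧ (D * star D = 1 ∧ star D * D = 1) ∧
      ¬ (∃ c : ℂ, D = c • (1 : UqH →L[ℂ] UqH)) := by
  -- q is a nonzero real, so θ ∈ {0, 1}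
  have hq : q ≠ 0 := by
    intro h
    rw [h] at hq0
    simp at hq0
  have hθ01 : θ = 0 ∨ θ = 1 := by
    rcases lt_trichotomy q.re 0 with h | h | h
    · right
      have harg : Complex.arg q = Real.pi := Complex.arg_eq_pi_iff.2 ⟨h, hqre⟩
      rw [hθ, harg, div_self Real.pi_ne_zero]
    · exfalso
      apply hq
      exact Complex.ext h hqre
    · left
      have harg : Complex.arg q = 0 := Complex.arg_eq_zero_iff.2 ⟨le_of_lt h, hqre⟩
      rw [hθ, harg, zero_div]
  have hexp : ∀ j : ℤ,
      Complex.exp (-(2 * (Real.pi : ℂ) * (θ : ℂ) * (j : ℂ)) * Complex.I) = 1 := by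
    intro j
    rcases hθ01 with h | h
    · rw [h]
      norm_num
    · rw [h]
      have : (-(2 * (Real.pi : ℂ) * ((1 : ℝ) : ℂ) * (j : ℂ)) * Complex.I)
          = ((-j : ℤ) : ℂ) * (2 * (Real.pi : ℂ) * Complex.I) := by
        push_cast
        ring
      rw [this, Complex.exp_int_mul_two_pi_mul_I]
  have hDe : ∀ (i : ℕ) (j k : ℤ), D (e i j k) = e i j (k + 1) := by
    intro i j k
    rw [hD, hexp, one_smul]
  -- D is unitary
  have hDDs : D * ContinuousLinearMap.adjoint D = 1 := by
    apply ContinuousLinearMap.ext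
    intro g
    apply lp.ext
    funext p
    obtain ⟨i, j, k⟩ := p
    rw [ContinuousLinearMap.mul_apply, ContinuousLinearMap.one_apply,
      shift_apply D hDe, adj_shift_apply D hDe]
    have hk : k - 1 + 1 = k := by omega
    rw [hk]
  have hDsD : ContinuousLinearMap.adjoint D * D = 1 := by
    apply ContinuousLinearMap.ext
    intro g
    apply lp.ext
    funext p
    obtain ⟨i, j, k⟩ := p
    rw [ContinuousLinearMap.mul_apply, ContinuousLinearMap.one_apply,
      adj_shift_apply D hDe, shift_apply D hDe]
    have hk : k + 1 - 1 = k := by omega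
    rw [hk]
  have hstar1 : D * star D = 1 := by rw [ContinuousLinearMap.star_eq_adjoint]; exact hDDs
  have hstar2 : star D * D = 1 := by rw [ContinuousLinearMap.star_eq_adjoint]; exact hDsD
  -- D commutes with the generators
  have hcommA : D * A = A * D := by
    apply clm_ext_e
    intro i j k
    simp only [ContinuousLinearMap.mul_apply]
    rw [hA, hDe, map_smul, hDe, hA]
  have hcommB : D * B = B * D := by
    apply clm_ext_e
    intro i j k
    simp only [ContinuousLinearMap.mul_apply]
    rw [hB, hDe, map_smul, hDe, hB]
  -- D commutes with everything in 𝒜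
  have hcomm : ∀ S ∈ 𝒜, D * S = S * D := by
    intro S hS
    rw [h𝒜] at hS
    have hclosed : IsClosed {x : UqH →L[ℂ] UqH | D * x = x * D} := by
      have hset : {x : UqH →L[ℂ] UqH | D * x = x * D}
          = (fun x : UqH →L[ℂ] UqH => D * x - x * D) ⁻¹' {0} := by
        ext x
        simp [sub_eq_zero]
      rw [hset]
      exact IsClosed.preimage
        ((continuous_const.mul continuous_id).sub (continuous_id.mul continuous_const))
        isClosed_singleton
    have hsub : ((StarAlgebra.adjoin ℂ ({A, B, D} : Set (UqH →L[ℂ] UqH))) : Set (UqH →L[ℂ] UqH))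
        ⊆ {x : UqH →L[ℂ] UqH | D * x = x * D} := by
      intro x hx
      simp only [Set.mem_setOf_eq]
      have hx' : x ∈ StarAlgebra.adjoin ℂ ({A, B, D} : Set (UqH →L[ℂ] UqH)) := hx
      refine StarAlgebra.adjoin_induction (fun y hy => ?_) (fun r => ?_)
        (fun y z _ _ hy hz => ?_) (fun y z _ _ hy hz => ?_) (fun y _ hy => ?_) hx'
      · rcases hy with h | h | h
        · rw [h]; exact hcommA
        · rw [h]; exact hcommB
        · rw [Set.mem_singleton_iff] at h
          rw [h]
      · exact (Algebra.commutes r D).symm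
      · rw [mul_add, add_mul, hy, hz]
      · rw [← mul_assoc, hy, mul_assoc, hz, ← mul_assoc]
      · -- star case, using unitarity of D
        have hy' : star y * star D = star D * star y := by
          have := congrArg star hy
          simpa [star_mul] using this
        have h3 : D * (star y * star D) * D = D * (star D * star y) * D := by rw [hy']
        rw [← mul_assoc D (star y) (star D), mul_assoc (D * star y) (star D) D, hstar2,
          mul_one, ← mul_assoc D (star D) (star y), hstar1, one_mul] at h3
        exact h3
    have hS' : S ∈ closure
        ((StarAlgebra.adjoin ℂ ({A, B, D} : Set (UqH →L[ℂ] UqH))) : Set (UqH →L[ℂ] UqH)) := hS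
    exact closure_minimal hsub hclosed hS'
  refine ⟨?_, hcomm, ⟨hstar1, hstar2⟩, ?_⟩
  · rw [h𝒜]
    exact StarSubalgebra.le_topologicalClosure _
      (StarAlgebra.subset_adjoin ℂ _ (by simp))
  · rintro ⟨c, hc⟩
    have h1 : D (e 0 0 0) = c • e 0 0 0 := by
      rw [hc]
      simp
    have h2 : e 0 0 1 = c • e 0 0 0 := by
      rw [show (1 : ℤ) = 0 + 1 by norm_num, ← hDe 0 0 0, h1]
    have h3 := congrArg (fun v : UqH => v (0, 0, 1)) h2
    have hne : ((0 : ℕ), (0 : ℤ), (1 : ℤ)) ≠ ((0 : ℕ), (0 : ℤ), (0 : ℤ)) := by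
      simp
    simp only [e, lp.coeFn_smul, Pi.smul_apply, smul_eq_mul] at h3
    rw [lp.single_apply_self, lp.single_apply_ne _ _ _ hne, mul_zero] at h3
    exact one_ne_zero h3
end
end

section
/- For every integer n ≥ 1, the operator norm satisfies ‖Σ_{j=0}^{n−1} D^{j}‖² ≥ (2n² + 1)/3. (This is the key estimate showing that the conditional expectation E_φ onto C(U_q(2)/_φ 𝕋) has infinite Watatani index.) -/
open scoped InnerProductSpace
noncomputable section

lemma onb_full : Orthonormal ℂ (fun p : ℕ × ℤ × ℤ => (lp.single 2 p (1:ℂ) : UqH)) := by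
  rw [orthonormal_iff_ite]
  intro a b
  rw [lp.inner_single_left]
  rcases eq_or_ne a b with h | h
  · subst h; simp [lp.single_apply_self, RCLike.inner_apply]
  · rw [lp.single_apply, Pi.single_apply, if_neg h]
    simp [RCLike.inner_apply, h]

lemma onb_e : Orthonormal ℂ (fun t : ℤ => e 0 0 t) := by
  have : (fun t : ℤ => e 0 0 t) = (fun p : ℕ × ℤ × ℤ => (lp.single 2 p (1:ℂ) : UqH)) ∘ (fun t : ℤ => ((0 : ℕ), (0 : ℤ), t)) := rfl
  rw [this]
  exact onb_full.comp _ (fun a b h => by simpa using h)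

lemma sum_id_real (N : ℕ) : ∑ m ∈ Finset.range N, (m : ℝ) = N * (N - 1) / 2 := by
  induction N with
  | zero => simp
  | succ N ih => rw [Finset.sum_range_succ, ih]; push_cast; ring

lemma abs_sum_real (N : ℕ) :
    ∑ m ∈ Finset.range N, ∑ m' ∈ Finset.range N, |(m : ℝ) - (m' : ℝ)|
      = N * ((N : ℝ) ^ 2 - 1) / 3 := by
  induction N with
  | zero => simp
  | succ N ih =>
    have h1 : ∀ m' ∈ Finset.range N, |(N : ℝ) - (m' : ℝ)| = (N : ℝ) - m' := by
      intro m' hm'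
      simp only [Finset.mem_range] at hm'
      have : (m' : ℝ) ≤ N := Nat.cast_le.2 hm'.le
      exact abs_of_nonneg (by linarith)
    have h2 : ∀ m ∈ Finset.range N, |(m : ℝ) - (N : ℝ)| = (N : ℝ) - m := by
      intro m hm
      rw [abs_sub_comm]; exact h1 m hm
    simp only [Finset.sum_range_succ]
    rw [Finset.sum_congr rfl (fun m' hm' => h1 m' hm')]
    have : ∀ m ∈ Finset.range N,
        (∑ m' ∈ Finset.range N, |(m : ℝ) - (m' : ℝ)|) + |(m : ℝ) - (N : ℝ)|
          = (∑ m' ∈ Finset.range N, |(m : ℝ) - (m' : ℝ)|) + ((N : ℝ) - m) := by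
      intro m hm; rw [h2 m hm]
    rw [Finset.sum_congr rfl this, Finset.sum_add_distrib, ih]
    simp only [Finset.sum_sub_distrib, sum_id_real, Finset.sum_const, Finset.card_range,
      nsmul_eq_mul, sub_self, abs_zero]
    push_cast
    ring

lemma pair_count (n d : ℕ) (hd : d ≤ n) :
    ∑ k ∈ Finset.range n, (if k + d < n then (1:ℝ) else 0) = (n : ℝ) - d := by
  rw [Finset.sum_boole]
  have : (Finset.range n).filter (fun k => k + d < n) = Finset.range (n - d) := by
    ext k; simp only [Finset.mem_filter, Finset.mem_range]; omega
  rw [this, Finset.card_range, Nat.cast_sub hd]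

lemma count_aux (n m m' : ℕ) (hm : m < n) (hm' : m' ≤ m) :
    ∑ k ∈ Finset.range n, ∑ k' ∈ Finset.range n,
      (if k + m = k' + m' then (1:ℝ) else 0) = (n : ℝ) - |(m : ℝ) - (m' : ℝ)| := by
  have hinner : ∀ k : ℕ, ∑ k' ∈ Finset.range n,
      (if k + m = k' + m' then (1:ℝ) else 0) = if k + (m - m') < n then (1:ℝ) else 0 := by
    intro k
    have : ∀ k' : ℕ, (if k + m = k' + m' then (1:ℝ) else 0)
        = (if k' = k + (m - m') then (1:ℝ) else 0) := by
      intro k'; exact if_congr (by omega) rfl rfl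
    rw [Finset.sum_congr rfl (fun k' _ => this k'), Finset.sum_ite_eq' (Finset.range n)]
    simp [Finset.mem_range]
  rw [Finset.sum_congr rfl (fun k _ => hinner k), pair_count n (m - m') (by omega)]
  have : |(m : ℝ) - (m' : ℝ)| = ((m - m' : ℕ) : ℝ) := by
    rw [Nat.cast_sub hm', abs_of_nonneg]
    exact sub_nonneg.2 (Nat.cast_le.2 hm')
  rw [this]

lemma count_pairs (n m m' : ℕ) (hm : m < n) (hm' : m' < n) :
    ∑ k ∈ Finset.range n, ∑ k' ∈ Finset.range n,
      (if k + m = k' + m' then (1:ℝ) else 0) = (n : ℝ) - |(m : ℝ) - (m' : ℝ)| := by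
  rcases le_total m' m with h | h
  · exact count_aux n m m' hm h
  · rw [Finset.sum_comm]
    have : ∀ k' k : ℕ, (if k + m = k' + m' then (1:ℝ) else 0)
        = (if k' + m' = k + m then (1:ℝ) else 0) := by
      intro k' k; exact if_congr eq_comm rfl rfl
    calc ∑ k' ∈ Finset.range n, ∑ k ∈ Finset.range n,
          (if k + m = k' + m' then (1:ℝ) else 0)
        = ∑ k' ∈ Finset.range n, ∑ k ∈ Finset.range n,
          (if k' + m' = k + m then (1:ℝ) else 0) := by
          exact Finset.sum_congr rfl (fun k' _ => Finset.sum_congr rfl (fun k _ => this k' k))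
      _ = (n : ℝ) - |(m' : ℝ) - (m : ℝ)| := count_aux n m' m hm' h
      _ = (n : ℝ) - |(m : ℝ) - (m' : ℝ)| := by rw [abs_sub_comm]

lemma main_count (n : ℕ) :
    ∑ m ∈ Finset.range n, ∑ m' ∈ Finset.range n,
      ((n : ℝ) - |(m : ℝ) - (m' : ℝ)|) = n * (2 * (n : ℝ) ^ 2 + 1) / 3 := by
  simp only [Finset.sum_sub_distrib, Finset.sum_const, Finset.card_range, nsmul_eq_mul,
    abs_sum_real]
  ring

/-- for every `n ≥ 1`, `‖∑_{j=0}^{n−1} D^j‖² ≥ (2n² + 1)/3`, the key estimate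
showing that the conditional expectation `E_φ` has infinite Watatani index. -/
theorem norm_sq_sum_D_pow_ge
    (q : ℂ) (hq0 : 0 < ‖q‖) (hq1 : ‖q‖ < 1)
    (θ : ℝ) (hθ : θ = Complex.arg q / Real.pi)
    (D : UqH →L[ℂ] UqH)
    (hD : ∀ (i : ℕ) (j k : ℤ),
      D (e i j k) = Complex.exp (-(2 * (Real.pi : ℂ) * (θ : ℂ) * (j : ℂ)) * Complex.I) • e i j (k + 1)) :
    ∀ n : ℕ, 1 ≤ n →
      ((2 * (n : ℝ) ^ 2 + 1) / 3 : ℝ) ≤ ‖∑ j ∈ Finset.range n, D ^ j‖ ^ 2 := by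
  intro n hn
  set S : UqH →L[ℂ] UqH := ∑ j ∈ Finset.range n, D ^ j with hS
  have hD0 : ∀ k : ℤ, D (e 0 0 k) = e 0 0 (k + 1) := by
    intro k
    rw [hD 0 0 k]
    norm_num
  have hpow : ∀ (m : ℕ) (k : ℤ), (D ^ m) (e 0 0 k) = e 0 0 (k + m) := by
    intro m
    induction m with
    | zero => intro k; simp
    | succ m ih =>
      intro k
      rw [pow_succ, ContinuousLinearMap.mul_apply, hD0, ih]
      congr 1
      push_cast; ring
  have hip : ∀ a b : ℤ, (⟪e 0 0 a, e 0 0 b⟫_ℂ) = if a = b then 1 else 0 :=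
    orthonormal_iff_ite.mp onb_e
  set v : UqH := ∑ k ∈ Finset.range n, e 0 0 (k : ℤ) with hv
  have hvnorm : ‖v‖ ^ 2 = (n : ℝ) := by
    have hvv : (⟪v, v⟫_ℂ) = (n : ℂ) := by
      rw [hv, sum_inner]
      have : ∀ k ∈ Finset.range n,
          (⟪e 0 0 (k : ℤ), ∑ k' ∈ Finset.range n, e 0 0 (k' : ℤ)⟫_ℂ) = 1 := by
        intro k hk
        rw [inner_sum]
        have : ∀ k' : ℕ, (⟪e 0 0 (k : ℤ), e 0 0 (k' : ℤ)⟫_ℂ) = if k' = k then 1 else 0 := by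
          intro k'
          rw [hip]
          exact if_congr (by omega) rfl rfl
        rw [Finset.sum_congr rfl (fun k' _ => this k'), Finset.sum_ite_eq' (Finset.range n)]
        simp [Finset.mem_range.2 (Finset.mem_range.1 hk)]
      rw [Finset.sum_congr rfl this]
      simp
    have := InnerProductSpace.norm_sq_eq_re_inner (𝕜 := ℂ) v
    rw [this, hvv]
    simp
  have hSv : S v = ∑ m ∈ Finset.range n, ∑ k ∈ Finset.range n, e 0 0 ((k : ℤ) + m) := by
    rw [hS, ContinuousLinearMap.sum_apply]
    refine Finset.sum_congr rfl (fun m _ => ?_)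
    rw [hv, map_sum]
    exact Finset.sum_congr rfl (fun k _ => hpow m (k : ℤ))
  have hSvnorm : ‖S v‖ ^ 2 = (n : ℝ) * (2 * (n : ℝ) ^ 2 + 1) / 3 := by
    have hvv : (⟪S v, S v⟫_ℂ)
        = ((∑ m ∈ Finset.range n, ∑ m' ∈ Finset.range n,
            ((n : ℝ) - |(m : ℝ) - (m' : ℝ)|) : ℝ) : ℂ) := by
      rw [hSv]
      rw [sum_inner]
      have houter : ∀ m ∈ Finset.range n,
          (⟪∑ k ∈ Finset.range n, e 0 0 ((k : ℤ) + m),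
            ∑ m' ∈ Finset.range n, ∑ k' ∈ Finset.range n, e 0 0 ((k' : ℤ) + m')⟫_ℂ)
          = ((∑ m' ∈ Finset.range n, ((n : ℝ) - |(m : ℝ) - (m' : ℝ)|) : ℝ) : ℂ) := by
        intro m hm
        rw [sum_inner]
        simp only [inner_sum]
        rw [Finset.sum_comm, Complex.ofReal_sum]
        refine Finset.sum_congr rfl (fun m' hm' => ?_)
        rw [← count_pairs n m m' (Finset.mem_range.1 hm) (Finset.mem_range.1 hm'),
          Complex.ofReal_sum]
        refine Finset.sum_congr rfl (fun k _ => ?_)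
        rw [Complex.ofReal_sum]
        refine Finset.sum_congr rfl (fun k' _ => ?_)
        rw [hip]
        rw [if_congr (show ((k:ℤ) + m = (k':ℤ) + m') ↔ (k + m = k' + m') by omega) rfl rfl]
        split <;> simp
      rw [Finset.sum_congr rfl houter]
      push_cast
      rfl
    have := InnerProductSpace.norm_sq_eq_re_inner (𝕜 := ℂ) (S v)
    rw [this, hvv, main_count n, RCLike.re_to_complex, Complex.ofReal_re]
  have hle : ‖S v‖ ≤ ‖S‖ * ‖v‖ := S.le_opNorm v
  have hsq : ‖S v‖ ^ 2 ≤ ‖S‖ ^ 2 * ‖v‖ ^ 2 := by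
    calc ‖S v‖ ^ 2 ≤ (‖S‖ * ‖v‖) ^ 2 := by
          exact pow_le_pow_left₀ (norm_nonneg _) hle 2
      _ = ‖S‖ ^ 2 * ‖v‖ ^ 2 := by ring
  rw [hSvnorm, hvnorm] at hsq
  have hn' : (0 : ℝ) < n := by exact_mod_cast hn
  have h2 : (2 * (n : ℝ) ^ 2 + 1) / 3 * n ≤ ‖S‖ ^ 2 * n := by linarith
  exact le_of_mul_le_mul_right h2 hn'
end
end
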